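/- arXiv:2012.06783 — 4 statements merged into one kernel-verified Lean document; each statement's English description precedes it below -/
import Mathlib

section
/- Let X and Y be real Banach spaces, let T : Y → X be a bounded linear operator that is not compact, and suppose X has a Schauder basis (e_n)_{n∈ℕ}. Then there exist a semi-normalized block basic sequence (u_j)_{j∈ℕ} in X with respect to (e_n) and a bounded semi-normalized sequence (v_j)_{j∈ℕ} in Y such that (u_j) is equivalent to (T v_j). -/
open scoped BigOperators

/-- `e` is a Schauder basis of `X`: every vector has a unique expansion as a norm-convergent
series `∑ n, a n • e n` (partial sums over `Finset.range N`). -/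
def IsSchauderBasis {X : Type*} [NormedAddCommGroup X] [NormedSpace ℝ X] (e : ℕ → X) : Prop :=
  ∀ x : X, ∃! a : ℕ → ℝ,
    Filter.Tendsto (fun N => ∑ n ∈ Finset.range N, a n • e n) Filter.atTop (nhds x)

/-- `u` is a block basic sequence with respect to `e`. -/
def IsBlockBasic {X : Type*} [NormedAddCommGroup X] [NormedSpace ℝ X]
    (e : ℕ → X) (u : ℕ → X) : Prop :=
  ∃ (A : ℕ → Finset ℕ) (a : ℕ → ℝ),
    (∀ j, (A j).Nonempty) ∧
    (∀ j, ∀ m ∈ A j, ∀ k ∈ A (j + 1), m < k) ∧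
    (∀ j, u j = ∑ n ∈ A j, a n • e n)

/-- A sequence is semi-normalized if its norms are bounded away from zero and from infinity. -/
def SemiNormalized {X : Type*} [NormedAddCommGroup X] (u : ℕ → X) : Prop :=
  ∃ c C : ℝ, 0 < c ∧ ∀ j, c ≤ ‖u j‖ ∧ ‖u j‖ ≤ C

/-- Two sequences (possibly in different spaces) are equivalent. -/
def SeqEquiv {X Y : Type*} [NormedAddCommGroup X] [NormedSpace ℝ X]
    [NormedAddCommGroup Y] [NormedSpace ℝ Y] (u : ℕ → X) (w : ℕ → Y) : Prop :=
  ∃ C : ℝ, 1 ≤ C ∧ ∀ (a : ℕ → ℝ) (s : Finset ℕ),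
    C⁻¹ * ‖∑ j ∈ s, a j • w j‖ ≤ ‖∑ j ∈ s, a j • u j‖ ∧
    ‖∑ j ∈ s, a j • u j‖ ≤ C * ‖∑ j ∈ s, a j • w j‖

/-- A bounded linear operator is compact if the image of the closed unit ball is
relatively compact. -/
def CompactOp {X Y : Type*} [NormedAddCommGroup X] [NormedSpace ℝ X]
    [NormedAddCommGroup Y] [NormedSpace ℝ Y] (T : Y →L[ℝ] X) : Prop :=
  IsCompact (closure (T '' Metric.closedBall 0 1))

/-- `e` is an unconditional basis of `X`. -/
def IsUncondBasis {X : Type*} [NormedAddCommGroup X] [NormedSpace ℝ X] (e : ℕ → X) : Prop :=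
  (∀ n, e n ≠ 0) ∧ ∀ x : X, ∃! a : ℕ → ℝ, HasSum (fun n => a n • e n) x

/-- `u` is disjointly finitely supported with respect to `e`. -/
def DisjSupported {X : Type*} [NormedAddCommGroup X] [NormedSpace ℝ X]
    (e : ℕ → X) (u : ℕ → X) : Prop :=
  ∃ A : ℕ → Finset ℕ, Pairwise (Function.onFun Disjoint A) ∧
    ∀ j, u j ∈ Submodule.span ℝ (e '' (A j : Set ℕ))

/-- The basis `e` satisfies a lower `q`-estimate. -/
def LowerEstimate {X : Type*} [NormedAddCommGroup X] [NormedSpace ℝ X]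
    (e : ℕ → X) (q : ℝ) : Prop :=
  ∃ C : ℝ, 0 < C ∧ ∀ (m : ℕ) (f : Fin m → X) (A : Fin m → Finset ℕ),
    Pairwise (Function.onFun Disjoint A) →
    (∀ i, f i ∈ Submodule.span ℝ (e '' (A i : Set ℕ))) →
    (∑ i, ‖f i‖ ^ q) ^ (1 / q) ≤ C * ‖∑ i, f i‖

/-- The basis `e` satisfies an upper `q`-estimate. -/
def UpperEstimate {X : Type*} [NormedAddCommGroup X] [NormedSpace ℝ X]
    (e : ℕ → X) (q : ℝ) : Prop :=
  ∃ C : ℝ, 0 < C ∧ ∀ (m : ℕ) (f : Fin m → X) (A : Fin m → Finset ℕ),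
    Pairwise (Function.onFun Disjoint A) →
    (∀ i, f i ∈ Submodule.span ℝ (e '' (A i : Set ℕ))) →
    ‖∑ i, f i‖ ≤ C * (∑ i, ‖f i‖ ^ q) ^ (1 / q)

/-- `u` is equivalent to the canonical basis of `ℓ_q`. -/
def EquivCanonLq {X : Type*} [NormedAddCommGroup X] [NormedSpace ℝ X]
    (u : ℕ → X) (q : ℝ) : Prop :=
  ∃ C : ℝ, 1 ≤ C ∧ ∀ (a : ℕ → ℝ) (s : Finset ℕ),
    C⁻¹ * (∑ j ∈ s, |a j| ^ q) ^ (1 / q) ≤ ‖∑ j ∈ s, a j • u j‖ ∧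
    ‖∑ j ∈ s, a j • u j‖ ≤ C * (∑ j ∈ s, |a j| ^ q) ^ (1 / q)

/-- `Z` contains an isomorphic copy of `ℓ_q`: there is a bounded linear map `J : ℓ_q → Z`
which is bounded below. -/
def ContainsLp (Z : Type*) [NormedAddCommGroup Z] [NormedSpace ℝ Z] (q : ℝ) : Prop :=
  ∃ (J : lp (fun _ : ℕ => ℝ) (ENNReal.ofReal q) →ₗ[ℝ] Z) (C c : ℝ), 0 < c ∧
    ∀ f, ‖J f‖ ≤ C * ‖f‖ ∧ c * ‖f‖ ≤ ‖J f‖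

/-- `T` is strictly singular: it is bounded below on no infinite-dimensional subspace. -/
def StrictlySingular {X Y : Type*} [NormedAddCommGroup X] [NormedSpace ℝ X]
    [NormedAddCommGroup Y] [NormedSpace ℝ Y] (T : Y →L[ℝ] X) : Prop :=
  ∀ (Z : Submodule ℝ Y) (c : ℝ), 0 < c → (∀ z ∈ Z, c * ‖z‖ ≤ ‖T z‖) →
    FiniteDimensional ℝ Z

/-- A finite family of Banach spaces is splitting for unconditional bases. -/
def SplittingFamily {ι : Type*} [Fintype ι] (Z : ι → Type*)
    [∀ i, NormedAddCommGroup (Z i)] [∀ i, NormedSpace ℝ (Z i)] : Prop :=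
  ∀ w : ℕ → (∀ i, Z i), IsUncondBasis w →
    ∃ N : ι → Set ℕ, Pairwise (Function.onFun Disjoint N) ∧ (⋃ i, N i) = Set.univ ∧
      ∀ i, Nonempty ((Submodule.span ℝ (w '' N i)).topologicalClosure ≃L[ℝ] Z i)

/-- A pair of Banach spaces is splitting for unconditional bases. -/
def SplittingPair (U V : Type*) [NormedAddCommGroup U] [NormedSpace ℝ U]
    [NormedAddCommGroup V] [NormedSpace ℝ V] : Prop :=
  ∀ w : ℕ → U × V, IsUncondBasis w →
    ∃ N₁ N₂ : Set ℕ, Disjoint N₁ N₂ ∧ N₁ ∪ N₂ = Set.univ ∧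
      Nonempty ((Submodule.span ℝ (w '' N₁)).topologicalClosure ≃L[ℝ] U) ∧
      Nonempty ((Submodule.span ℝ (w '' N₂)).topologicalClosure ≃L[ℝ] V)

/-- `U` has a unique, up to equivalence and permutation, unconditional basis. -/
def HasUTAPBasis (U : Type*) [NormedAddCommGroup U] [NormedSpace ℝ U] : Prop :=
  ∃ e : ℕ → U, IsUncondBasis e ∧ SemiNormalized e ∧
    ∀ f : ℕ → U, IsUncondBasis f → SemiNormalized f →
      ∃ π : Equiv.Perm ℕ, SeqEquiv (fun n => f (π n)) e

/-- `y` is a subsymmetric basic sequence: semi-normalized, an unconditional basis of its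
closed linear span, and equivalent to all of its subsequences. -/
def IsSubsymmetric {X : Type*} [NormedAddCommGroup X] [NormedSpace ℝ X] (y : ℕ → X) : Prop :=
  SemiNormalized y ∧ (∀ n, y n ≠ 0) ∧
  (∀ x : X, x ∈ (Submodule.span ℝ (Set.range y)).topologicalClosure →
    ∃! a : ℕ → ℝ, HasSum (fun n => a n • y n) x) ∧
  ∀ k : ℕ → ℕ, StrictMono k → SeqEquiv (fun n => y (k n)) y


namespace Stmt0Aux

variable {X : Type*} [NormedAddCommGroup X] [NormedSpace ℝ X] [CompleteSpace X]

noncomputable def psumBCF (e : ℕ → X) (a : ℕ → ℝ)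
    (h : CauchySeq (fun N => ∑ n ∈ Finset.range N, a n • e n)) : BoundedContinuousFunction ℕ X :=
  BoundedContinuousFunction.mk ⟨fun N => ∑ n ∈ Finset.range N, a n • e n,
    continuous_of_discreteTopology⟩
    (by obtain ⟨R, _, hR⟩ := cauchySeq_bdd h; exact ⟨R, fun x y => (hR x y).le⟩)

@[simp] lemma psumBCF_apply (e : ℕ → X) (a : ℕ → ℝ) (h) (N : ℕ) :
    psumBCF e a h N = ∑ n ∈ Finset.range N, a n • e n := rfl

def Gsub (e : ℕ → X) : Submodule ℝ (BoundedContinuousFunction ℕ X) where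
  carrier := {g | g 0 = 0 ∧ (∀ N, g (N + 1) - g N ∈ Submodule.span ℝ {e N}) ∧
    CauchySeq (fun N => g N)}
  zero_mem' := ⟨rfl, fun N => by simp, cauchySeq_const _⟩
  add_mem' := by
    rintro f g ⟨hf0, hf1, hf2⟩ ⟨hg0, hg1, hg2⟩
    refine ⟨by simp [hf0, hg0], fun N => ?_, by
      have h : CauchySeq fun N => f N + g N := hf2.add hg2
      simpa using h⟩
    have : (f + g) (N + 1) - (f + g) N = (f (N + 1) - f N) + (g (N + 1) - g N) := by
      simp; abel
    rw [this]; exact Submodule.add_mem _ (hf1 N) (hg1 N)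
  smul_mem' := by
    rintro c f ⟨hf0, hf1, hf2⟩
    refine ⟨by simp [hf0], fun N => ?_,
      by
        have h : CauchySeq fun N => c • f N := (uniformContinuous_const_smul c).comp_cauchySeq hf2
        simpa [Function.comp] using h⟩
    have : (c • f) (N + 1) - (c • f) N = c • (f (N + 1) - f N) := by simp [smul_sub]
    rw [this]; exact Submodule.smul_mem _ _ (hf1 N)

lemma mem_Gsub {e : ℕ → X} {g : BoundedContinuousFunction ℕ X} :
    g ∈ Gsub e ↔ g 0 = 0 ∧ (∀ N, g (N + 1) - g N ∈ Submodule.span ℝ {e N}) ∧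
      CauchySeq (fun N => g N) := Iff.rfl

lemma isClosed_Gsub (e : ℕ → X) : IsClosed ((Gsub e : Submodule ℝ (BoundedContinuousFunction ℕ X)) : Set (BoundedContinuousFunction ℕ X)) := by
  have h1 : IsClosed {g : BoundedContinuousFunction ℕ X | g 0 = 0} :=
    isClosed_eq (continuous_eval_const _) continuous_const
  have h2 : ∀ N : ℕ, IsClosed {g : BoundedContinuousFunction ℕ X |
      g (N + 1) - g N ∈ Submodule.span ℝ {e N}} := by
    intro N
    have hc : Continuous fun g : BoundedContinuousFunction ℕ X => g (N + 1) - g N :=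
      (continuous_eval_const _).sub
        (continuous_eval_const _)
    haveI : FiniteDimensional ℝ (Submodule.span ℝ ({e N} : Set X)) :=
      FiniteDimensional.span_of_finite ℝ (Set.finite_singleton (e N))
    exact IsClosed.preimage hc (Submodule.closed_of_finiteDimensional _)
  have h3 : IsClosed {g : BoundedContinuousFunction ℕ X | CauchySeq (fun N => g N)} := by
    apply isClosed_of_closure_subset
    intro g hg
    simp only [Set.mem_setOf_eq]
    rw [Metric.cauchySeq_iff]
    intro ε hε
    obtain ⟨h, hh, hgh⟩ := Metric.mem_closure_iff.mp hg (ε / 3) (by linarith)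
    obtain ⟨N₀, hN₀⟩ := Metric.cauchySeq_iff.mp hh (ε / 3) (by linarith)
    refine ⟨N₀, fun m hm n hn => ?_⟩
    calc dist (g m) (g n) ≤ dist (g m) (h m) + dist (h m) (h n) + dist (h n) (g n) :=
          dist_triangle4 _ _ _ _
      _ < ε / 3 + ε / 3 + ε / 3 := by
          have hm1 := BoundedContinuousFunction.dist_coe_le_dist (f := g) (g := h) m
          have hn1 := BoundedContinuousFunction.dist_coe_le_dist (f := g) (g := h) n
          have := hN₀ m hm n hn
          rw [dist_comm (h n) (g n)]
          gcongr <;> linarith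
      _ = ε := by ring
  have : ((Gsub e : Submodule ℝ (BoundedContinuousFunction ℕ X)) : Set (BoundedContinuousFunction ℕ X)) =
      {g : BoundedContinuousFunction ℕ X | g 0 = 0} ∩
      ((⋂ N, {g : BoundedContinuousFunction ℕ X | g (N + 1) - g N ∈ Submodule.span ℝ {e N}}) ∩
       {g : BoundedContinuousFunction ℕ X | CauchySeq (fun N => g N)}) := by
    ext g
    simp only [Set.mem_inter_iff, Set.mem_iInter, Set.mem_setOf_eq]
    exact ⟨fun ⟨a, b, c⟩ => ⟨a, b, c⟩, fun ⟨a, b, c⟩ => ⟨a, b, c⟩⟩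
  rw [this]
  exact h1.inter ((isClosed_iInter h2).inter h3)

noncomputable def limG (e : ℕ → X) (g : Gsub e) : X :=
  (cauchySeq_tendsto_of_complete (g.2.2.2)).choose

lemma limG_spec (e : ℕ → X) (g : Gsub e) :
    Filter.Tendsto (fun N => (g : BoundedContinuousFunction ℕ X) N) Filter.atTop (nhds (limG e g)) :=
  (cauchySeq_tendsto_of_complete (g.2.2.2)).choose_spec

noncomputable def limCLM (e : ℕ → X) : Gsub e →L[ℝ] X := by
  haveI : CompleteSpace (Gsub e) := (isClosed_Gsub e).completeSpace_coe
  refine LinearMap.mkContinuous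
    { toFun := limG e
      map_add' := fun f g => ?_
      map_smul' := fun c f => ?_ } 1 (fun g => ?_)
  · exact tendsto_nhds_unique (limG_spec e (f + g))
      (by simpa using (limG_spec e f).add (limG_spec e g))
  · exact tendsto_nhds_unique (limG_spec e (c • f))
      (by simpa using (limG_spec e f).const_smul c)
  · refine le_of_tendsto ((limG_spec e g).norm) (Filter.Eventually.of_forall fun N => ?_)
    rw [one_mul]
    calc ‖(g : BoundedContinuousFunction ℕ X) N‖ ≤ ‖(g : BoundedContinuousFunction ℕ X)‖ :=
          BoundedContinuousFunction.norm_coe_le_norm _ N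
      _ = ‖g‖ := rfl

end Stmt0Aux

namespace Stmt0Aux
variable {X : Type*} [NormedAddCommGroup X] [NormedSpace ℝ X] [CompleteSpace X]

lemma psumBCF_mem_Gsub (e : ℕ → X) (a : ℕ → ℝ) (h) : psumBCF e a h ∈ Gsub e := by
  refine ⟨by simp, fun N => ?_, h⟩
  have : psumBCF e a h (N + 1) - psumBCF e a h N = a N • e N := by
    simp [Finset.sum_range_succ]
  rw [this]
  exact Submodule.mem_span_singleton.mpr ⟨a N, rfl⟩

lemma limCLM_psumBCF (e : ℕ → X) (a : ℕ → ℝ) (x : X)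
    (hx : Filter.Tendsto (fun N => ∑ n ∈ Finset.range N, a n • e n) Filter.atTop (nhds x)) :
    limCLM e ⟨psumBCF e a hx.cauchySeq, psumBCF_mem_Gsub e a hx.cauchySeq⟩ = x :=
  tendsto_nhds_unique (limG_spec e _) hx

lemma limCLM_injective (e : ℕ → X) (he : IsSchauderBasis e) :
    LinearMap.ker (limCLM e : Gsub e →ₗ[ℝ] X) = ⊥ := by
  rw [LinearMap.ker_eq_bot']
  intro g hg
  -- extract coefficients
  have hc : ∀ N, ∃ c : ℝ, c • e N = (g : BoundedContinuousFunction ℕ X) (N + 1) -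
      (g : BoundedContinuousFunction ℕ X) N := fun N =>
    Submodule.mem_span_singleton.mp (g.2.2.1 N)
  choose c hcspec using hc
  have hval : ∀ N, (g : BoundedContinuousFunction ℕ X) N = ∑ n ∈ Finset.range N, c n • e n := by
    intro N
    induction N with
    | zero => simpa using g.2.1
    | succ N ih =>
      rw [Finset.sum_range_succ, ← ih, hcspec N]; abel
  have htend : Filter.Tendsto (fun N => ∑ n ∈ Finset.range N, c n • e n) Filter.atTop
      (nhds (0 : X)) := by
    have := limG_spec e g
    rw [show limG e g = 0 from hg] at this
    exact this.congr (fun N => hval N)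
  have hzero : Filter.Tendsto (fun N => ∑ n ∈ Finset.range N, (0 : ℝ) • e n) Filter.atTop
      (nhds (0 : X)) := by simpa using (tendsto_const_nhds : Filter.Tendsto (fun _ : ℕ => (0:X)) _ _)
  have : c = fun _ => (0 : ℝ) := (he 0).unique htend hzero
  have : ∀ N, (g : BoundedContinuousFunction ℕ X) N = 0 := by
    intro N; rw [hval N, this]; simp
  apply Subtype.ext
  apply BoundedContinuousFunction.ext
  intro N
  simpa using this N

lemma limCLM_surjective (e : ℕ → X) (he : IsSchauderBasis e) :
    LinearMap.range (limCLM e : Gsub e →ₗ[ℝ] X) = ⊤ := by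
  rw [LinearMap.range_eq_top]
  intro x
  obtain ⟨a, ha⟩ := (he x).exists
  exact ⟨⟨psumBCF e a ha.cauchySeq, psumBCF_mem_Gsub e a ha.cauchySeq⟩, limCLM_psumBCF e a x ha⟩

theorem supBound (e : ℕ → X) (he : IsSchauderBasis e) :
    ∃ C : ℝ, 1 ≤ C ∧ ∀ (x : X) (a : ℕ → ℝ),
      Filter.Tendsto (fun N => ∑ n ∈ Finset.range N, a n • e n) Filter.atTop (nhds x) →
      ∀ N, ‖∑ n ∈ Finset.range N, a n • e n‖ ≤ C * ‖x‖ := by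
  haveI : CompleteSpace (Gsub e) := (isClosed_Gsub e).completeSpace_coe
  set L := ContinuousLinearEquiv.ofBijective (limCLM e) (limCLM_injective e he)
    (limCLM_surjective e he) with hL
  set C₀ : ℝ := ‖(L.symm : X →L[ℝ] Gsub e)‖ with hC₀
  refine ⟨max C₀ 1, le_max_right _ _, fun x a ha N => ?_⟩
  set g : Gsub e := ⟨psumBCF e a ha.cauchySeq, psumBCF_mem_Gsub e a ha.cauchySeq⟩ with hgdef
  have hLg : L g = x := limCLM_psumBCF e a x ha
  have hsymm : L.symm x = g := by rw [← hLg]; exact L.symm_apply_apply g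
  have h1 : ‖∑ n ∈ Finset.range N, a n • e n‖ ≤ ‖g‖ := by
    calc ‖∑ n ∈ Finset.range N, a n • e n‖ = ‖(g : BoundedContinuousFunction ℕ X) N‖ := by
          rw [hgdef]; simp
      _ ≤ ‖(g : BoundedContinuousFunction ℕ X)‖ := BoundedContinuousFunction.norm_coe_le_norm _ N
      _ = ‖g‖ := rfl
  calc ‖∑ n ∈ Finset.range N, a n • e n‖ ≤ ‖g‖ := h1
    _ = ‖L.symm x‖ := by rw [hsymm]
    _ ≤ C₀ * ‖x‖ := (L.symm : X →L[ℝ] Gsub e).le_opNorm x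
    _ ≤ max C₀ 1 * ‖x‖ := by gcongr; exact le_max_left _ _

end Stmt0Aux

namespace Stmt0Aux

/-- A non-totally-bounded set contains a uniformly separated sequence. -/
lemma exists_separated_seq {X : Type*} [NormedAddCommGroup X] {S : Set X}
    (hS : ¬ TotallyBounded S) :
    ∃ ε : ℝ, 0 < ε ∧ ∃ p : ℕ → X, (∀ k, p k ∈ S) ∧
      ∀ k l, k ≠ l → ε ≤ dist (p k) (p l) := by
  rw [Metric.totallyBounded_iff] at hS
  push_neg at hS
  obtain ⟨ε, hε, hsep⟩ := hS
  have key : ∀ t : Finset X, ∃ y ∈ S, ∀ z ∈ t, ε ≤ dist y z := by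
    intro t
    have hsub := hsep ↑t t.finite_toSet
    obtain ⟨y, hyS, hy⟩ := Set.not_subset.mp hsub
    refine ⟨y, hyS, fun z hz => ?_⟩
    by_contra h
    push_neg at h
    exact hy (Set.mem_biUnion hz (Metric.mem_ball.mpr h))
  classical
  choose F hFS hFsep using key
  let q : ℕ → Finset X := fun k => Nat.rec ∅ (fun _ t => insert (F t) t) k
  have hq0 : q 0 = ∅ := rfl
  have hqsucc : ∀ k, q (k + 1) = insert (F (q k)) (q k) := fun k => rfl
  set p : ℕ → X := fun k => F (q k) with hp
  have hqmono : ∀ i k, i ≤ k → q i ⊆ q k := by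
    intro i k hik
    induction k with
    | zero => simpa [Nat.le_zero.mp hik] using Finset.Subset.refl _
    | succ k ih =>
      rcases Nat.lt_or_ge i (k+1) with h | h
      · exact (ih (Nat.lt_succ_iff.mp h)).trans (by rw [hqsucc]; exact Finset.subset_insert _ _)
      · have : i = k + 1 := le_antisymm hik h
        subst this; exact Finset.Subset.refl _
  have hpin : ∀ i k, i < k → p i ∈ q k := by
    intro i k hik
    have : p i ∈ q (i + 1) := by rw [hqsucc]; exact Finset.mem_insert_self _ _
    exact hqmono (i+1) k hik this
  refine ⟨ε, hε, p, fun k => hFS (q k), fun k l hkl => ?_⟩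
  rcases Nat.lt_or_ge k l with h | h
  · rw [dist_comm]; exact hFsep (q l) (p k) (hpin k l h)
  · exact hFsep (q k) (p l) (hpin l k (lt_of_le_of_ne h (Ne.symm hkl)))

end Stmt0Aux

namespace Stmt0Aux

lemma exists_sep_in_ball {X Y : Type*} [NormedAddCommGroup X] [NormedSpace ℝ X] [CompleteSpace X]
    [NormedAddCommGroup Y] [NormedSpace ℝ Y]
    (T : Y →L[ℝ] X) (hT : ¬ IsCompact (closure (T '' Metric.closedBall 0 1))) :
    ∃ ε : ℝ, 0 < ε ∧ ∃ v : ℕ → Y, (∀ k, ‖v k‖ ≤ 1) ∧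
      ∀ k l, k ≠ l → ε ≤ ‖T (v k) - T (v l)‖ := by
  have ntb : ¬ TotallyBounded (T '' Metric.closedBall 0 1) := by
    intro h
    exact hT (TotallyBounded.isCompact_of_isClosed h.closure isClosed_closure)
  obtain ⟨ε, hε, p, hpS, hpsep⟩ := exists_separated_seq ntb
  have : ∀ k, ∃ v : Y, ‖v‖ ≤ 1 ∧ T v = p k := by
    intro k
    obtain ⟨v, hv, hTv⟩ := hpS k
    exact ⟨v, by simpa using Metric.mem_closedBall.mp hv, hTv⟩
  choose v hv1 hv2 using this
  refine ⟨ε, hε, v, hv1, fun k l hkl => ?_⟩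
  rw [hv2, hv2, ← dist_eq_norm]
  exact hpsep k l hkl

lemma pair_close {X : Type*} [NormedAddCommGroup X] [NormedSpace ℝ X]
    (V : Submodule ℝ X) [FiniteDimensional ℝ V] (y : ℕ → X) (hy : ∀ k, y k ∈ V)
    (R : ℝ) (hR : ∀ k, ‖y k‖ ≤ R) (δ : ℝ) (hδ : 0 < δ) :
    ∃ k l : ℕ, k < l ∧ ‖y k - y l‖ < δ := by
  set q : ℕ → V := fun k => ⟨y k, hy k⟩ with hq
  have hqball : ∀ k, q k ∈ Metric.closedBall (0 : V) R := by
    intro k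
    rw [Metric.mem_closedBall, dist_zero_right]
    exact hR k
  obtain ⟨a, _, φ, hφ, hconv⟩ := tendsto_subseq_of_bounded Metric.isBounded_closedBall hqball
  obtain ⟨N₀, hN₀⟩ := Metric.cauchySeq_iff.mp hconv.cauchySeq δ hδ
  refine ⟨φ N₀, φ (N₀ + 1), hφ (Nat.lt_succ_self N₀), ?_⟩
  have := hN₀ N₀ le_rfl (N₀ + 1) (Nat.le_succ N₀)
  rw [Function.comp, Function.comp, dist_eq_norm] at this
  simpa using this

end Stmt0Aux

namespace Stmt0Aux
variable {X : Type*} [NormedAddCommGroup X] [NormedSpace ℝ X]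

noncomputable def cf {e : ℕ → X} (he : IsSchauderBasis e) (y : X) : ℕ → ℝ :=
  (he y).exists.choose

lemma cf_spec {e : ℕ → X} (he : IsSchauderBasis e) (y : X) :
    Filter.Tendsto (fun N => ∑ n ∈ Finset.range N, cf he y n • e n) Filter.atTop (nhds y) :=
  (he y).exists.choose_spec

lemma cf_unique {e : ℕ → X} (he : IsSchauderBasis e) (y : X) (a : ℕ → ℝ)
    (ha : Filter.Tendsto (fun N => ∑ n ∈ Finset.range N, a n • e n) Filter.atTop (nhds y)) :
    a = cf he y :=
  (he y).unique ha (cf_spec he y)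

noncomputable def Pc {e : ℕ → X} (he : IsSchauderBasis e) (N : ℕ) (y : X) : X :=
  ∑ n ∈ Finset.range N, cf he y n • e n

lemma Pc_sub {e : ℕ → X} (he : IsSchauderBasis e) (N : ℕ) (y z : X) :
    Pc he N (y - z) = Pc he N y - Pc he N z := by
  have h : (fun n => cf he y n - cf he z n) = cf he (y - z) := by
    apply cf_unique
    have := (cf_spec he y).sub (cf_spec he z)
    refine this.congr (fun N => ?_)
    rw [← Finset.sum_sub_distrib]
    exact Finset.sum_congr rfl (fun n _ => (sub_smul _ _ _).symm)
  unfold Pc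
  rw [← h, ← Finset.sum_sub_distrib]
  exact Finset.sum_congr rfl (fun n _ => sub_smul _ _ _)

lemma Pc_mem {e : ℕ → X} (he : IsSchauderBasis e) (N : ℕ) (y : X) :
    Pc he N y ∈ Submodule.span ℝ (e '' ↑(Finset.range N)) := by
  apply Submodule.sum_mem
  intro n hn
  exact Submodule.smul_mem _ _ (Submodule.subset_span ⟨n, by simpa using hn, rfl⟩)

lemma step {Y : Type*} [NormedAddCommGroup Y] [NormedSpace ℝ Y]
    {e : ℕ → X} (he : IsSchauderBasis e) (C : ℝ) (hC1 : 1 ≤ C)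
    (hC : ∀ (x : X) (a : ℕ → ℝ),
      Filter.Tendsto (fun N => ∑ n ∈ Finset.range N, a n • e n) Filter.atTop (nhds x) →
      ∀ N, ‖∑ n ∈ Finset.range N, a n • e n‖ ≤ C * ‖x‖)
    (T : Y →L[ℝ] X) (v' : ℕ → Y) (hv' : ∀ k, ‖v' k‖ ≤ 1) (ε : ℝ)
    (hsep : ∀ k l, k ≠ l → ε ≤ ‖T (v' k) - T (v' l)‖) :
    ∀ (N : ℕ) (δ : ℝ), 0 < δ → ∃ (N' : ℕ) (w : Y), N < N' ∧ ‖w‖ ≤ 2 ∧ ε ≤ ‖T w‖ ∧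
      ‖Pc he N (T w)‖ < δ ∧ ‖Pc he N' (T w) - T w‖ < δ := by
  intro N δ hδ
  haveI : FiniteDimensional ℝ (Submodule.span ℝ (e '' ↑(Finset.range N))) :=
    FiniteDimensional.span_of_finite ℝ ((Finset.range N).finite_toSet.image e)
  have hPbd : ∀ y : X, ∀ M, ‖Pc he M y‖ ≤ C * ‖y‖ := fun y M => hC y (cf he y) (cf_spec he y) M
  have hC0 : (0:ℝ) ≤ C := le_trans zero_le_one hC1
  obtain ⟨k, l, hkl, hclose⟩ := pair_close (Submodule.span ℝ (e '' ↑(Finset.range N)))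
    (fun k => Pc he N (T (v' k))) (fun k => Pc_mem he N _) (C * ‖T‖)
    (fun k => by
      have h1 : ‖T (v' k)‖ ≤ ‖T‖ := by
        calc ‖T (v' k)‖ ≤ ‖T‖ * ‖v' k‖ := T.le_opNorm _
          _ ≤ ‖T‖ := mul_le_of_le_one_right (norm_nonneg T) (hv' k)
      calc ‖Pc he N (T (v' k))‖ ≤ C * ‖T (v' k)‖ := hPbd _ N
        _ ≤ C * ‖T‖ := by gcongr)
    δ hδ
  set w : Y := v' k - v' l with hw
  have htail : ∃ N', N < N' ∧ ‖Pc he N' (T w) - T w‖ < δ := by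
    obtain ⟨N₀, hN₀⟩ := Metric.tendsto_atTop.mp (cf_spec he (T w)) δ hδ
    refine ⟨max N₀ (N + 1), lt_of_lt_of_le (Nat.lt_succ_self N) (le_max_right _ _), ?_⟩
    have := hN₀ (max N₀ (N + 1)) (le_max_left _ _)
    rw [dist_eq_norm] at this
    exact this
  obtain ⟨N', hNN', htail'⟩ := htail
  refine ⟨N', w, hNN', ?_, ?_, ?_, htail'⟩
  · calc ‖v' k - v' l‖ ≤ ‖v' k‖ + ‖v' l‖ := norm_sub_le _ _
      _ ≤ 2 := by have := hv' k; have := hv' l; linarith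
  · rw [hw, map_sub]; exact hsep k l (Nat.ne_of_lt hkl)
  · rw [hw, map_sub, Pc_sub]; exact hclose

end Stmt0Aux

namespace Stmt0Aux

set_option maxHeartbeats 1000000 in
lemma core {X Y : Type*} [NormedAddCommGroup X] [NormedSpace ℝ X]
    [NormedAddCommGroup Y] [NormedSpace ℝ Y]
    {e : ℕ → X} (he : IsSchauderBasis e) (C : ℝ) (hC1 : 1 ≤ C)
    (hC : ∀ (x : X) (a : ℕ → ℝ),
      Filter.Tendsto (fun N => ∑ n ∈ Finset.range N, a n • e n) Filter.atTop (nhds x) →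
      ∀ N, ‖∑ n ∈ Finset.range N, a n • e n‖ ≤ C * ‖x‖)
    (T : Y →L[ℝ] X) (v' : ℕ → Y) (hv' : ∀ k, ‖v' k‖ ≤ 1) (ε : ℝ) (hε : 0 < ε)
    (hsep : ∀ k l, k ≠ l → ε ≤ ‖T (v' k) - T (v' l)‖) :
    ∃ (u : ℕ → X) (v : ℕ → Y), IsBlockBasic e u ∧ SemiNormalized u ∧
      SemiNormalized v ∧ SeqEquiv u (fun j => T (v j)) := by
  classical
  have hC0 : (0:ℝ) < C := lt_of_lt_of_le zero_lt_one hC1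
  -- the perturbation parameters
  set δ : ℕ → ℝ := fun j => ε / (32 * C) * (1/2)^j with hδdef
  have hδpos : ∀ j, 0 < δ j := fun j => by positivity
  have hδle : ∀ j, δ j ≤ ε / 32 := by
    intro j
    rw [hδdef]
    have h1 : (1/2:ℝ)^j ≤ 1 := pow_le_one₀ (by norm_num) (by norm_num)
    have h2 : ε / (32 * C) ≤ ε / 32 := by
      apply div_le_div_of_nonneg_left hε.le (by norm_num) (by nlinarith)
    calc ε / (32 * C) * (1/2)^j ≤ ε / (32 * C) * 1 := by
          have : (0:ℝ) ≤ ε / (32 * C) := by positivity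
          nlinarith
      _ = ε / (32 * C) := mul_one _
      _ ≤ ε / 32 := h2
  -- the recursive step
  have hstep : ∀ (N j : ℕ), ∃ p : ℕ × Y, N < p.1 ∧ ‖p.2‖ ≤ 2 ∧ ε ≤ ‖T p.2‖ ∧
      ‖Pc he N (T p.2)‖ < δ j ∧ ‖Pc he p.1 (T p.2) - T p.2‖ < δ j := by
    intro N j
    obtain ⟨N', w, h1, h2, h3, h4, h5⟩ := step he C hC1 hC T v' hv' ε hsep N (δ j) (hδpos j)
    exact ⟨(N', w), h1, h2, h3, h4, h5⟩
  choose pick hp1 hp2 hp3 hp4 hp5 using hstep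
  -- the recursion
  set NN : ℕ → ℕ := fun j => Nat.rec 0 (fun j' prev => (pick prev j').1) j with hNNdef
  have hNN0 : NN 0 = 0 := rfl
  have hNNsucc : ∀ j, NN (j + 1) = (pick (NN j) j).1 := fun j => rfl
  set w : ℕ → Y := fun j => (pick (NN j) j).2 with hwdef
  set x : ℕ → X := fun j => T (w j) with hxdef
  have hlt : ∀ j, NN j < NN (j + 1) := fun j => hp1 (NN j) j
  have hNNmono : StrictMono NN := strictMono_nat_of_lt_succ hlt
  have hw2 : ∀ j, ‖w j‖ ≤ 2 := fun j => hp2 (NN j) j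
  have hxlow : ∀ j, ε ≤ ‖x j‖ := fun j => hp3 (NN j) j
  have hPsmall : ∀ j, ‖Pc he (NN j) (x j)‖ < δ j := fun j => hp4 (NN j) j
  have htail : ∀ j, ‖Pc he (NN (j+1)) (x j) - x j‖ < δ j := fun j => hp5 (NN j) j
  -- the blocks
  set A : ℕ → Finset ℕ := fun j => Finset.Ico (NN j) (NN (j + 1)) with hAdef
  set u : ℕ → X := fun j => ∑ n ∈ A j, cf he (x j) n • e n with hudef
  have hu_eq : ∀ j, u j = Pc he (NN (j+1)) (x j) - Pc he (NN j) (x j) := by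
    intro j
    rw [hudef]
    exact Finset.sum_Ico_eq_sub _ (hlt j).le
  have hux : ∀ j, ‖u j - x j‖ ≤ 2 * δ j := by
    intro j
    have : u j - x j = (Pc he (NN (j+1)) (x j) - x j) - Pc he (NN j) (x j) := by
      rw [hu_eq j]; abel
    rw [this]
    calc ‖(Pc he (NN (j+1)) (x j) - x j) - Pc he (NN j) (x j)‖
        ≤ ‖Pc he (NN (j+1)) (x j) - x j‖ + ‖Pc he (NN j) (x j)‖ := norm_sub_le _ _
      _ ≤ 2 * δ j := by have := (htail j).le; have := (hPsmall j).le; linarith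
  have hux2 : ∀ j, ‖u j - x j‖ ≤ ε / 16 := by
    intro j
    calc ‖u j - x j‖ ≤ 2 * δ j := hux j
      _ ≤ 2 * (ε / 32) := by have := hδle j; linarith
      _ = ε / 16 := by ring
  have hu_low : ∀ j, ε / 2 ≤ ‖u j‖ := by
    intro j
    have h1 := norm_sub_norm_le (u j) (x j)
    have h2 := hux2 j
    have h3 := hxlow j
    have := abs_le.mp (le_refl |‖u j‖ - ‖x j‖|)
    have h4 : ‖x j‖ - ‖u j‖ ≤ ε / 16 := by
      have := norm_sub_norm_le (x j) (u j)
      have : ‖x j‖ - ‖u j‖ ≤ ‖x j - u j‖ := this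
      rw [← norm_neg (x j - u j)] at this
      simp only [neg_sub] at this
      linarith [hux2 j]
    linarith
  have hTnorm : ε / 2 ≤ ‖T‖ := by
    have h1 := hxlow 0
    have h2 : ‖x 0‖ ≤ ‖T‖ * 2 := by
      calc ‖x 0‖ ≤ ‖T‖ * ‖w 0‖ := T.le_opNorm _
        _ ≤ ‖T‖ * 2 := by gcongr; exact hw2 0
    nlinarith
  have hu_up : ∀ j, ‖u j‖ ≤ 2 * ‖T‖ + ε := by
    intro j
    have h1 : ‖x j‖ ≤ 2 * ‖T‖ := by
      calc ‖x j‖ ≤ ‖T‖ * ‖w j‖ := T.le_opNorm _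
        _ ≤ ‖T‖ * 2 := by gcongr; exact hw2 j
        _ = 2 * ‖T‖ := mul_comm _ _
    have h2 : ‖u j‖ ≤ ‖u j - x j‖ + ‖x j‖ := by
      have := norm_add_le (u j - x j) (x j)
      simpa using this
    have := hux2 j
    nlinarith
  -- the block index function
  set J : ℕ → ℕ := fun n => Nat.findGreatest (fun j => NN j ≤ n) n with hJdef
  have hJ : ∀ j n, n ∈ A j → J n = j := by
    intro j n hn
    rw [hAdef] at hn
    simp only [Finset.mem_Ico] at hn
    have h1 : j ≤ J n := Nat.le_findGreatest (le_trans hNNmono.le_apply hn.1) hn.1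
    have h2 : NN (J n) ≤ n := by
      have h2' := Nat.findGreatest_spec (P := fun j => NN j ≤ n) (m := 0) (n := n)
        (Nat.zero_le n) (show NN 0 ≤ n from Nat.zero_le n)
      exact h2'
    have h3 : J n < j + 1 := by
      by_contra h
      push_neg at h
      exact absurd (le_trans (hNNmono.monotone h) h2) (not_le.mpr hn.2)
    omega
  set aa : ℕ → ℝ := fun n => cf he (x (J n)) n with haadef
  have hBlock : IsBlockBasic e u := by
    refine ⟨A, aa, fun j => Finset.nonempty_Ico.mpr (hlt j), ?_, ?_⟩
    · intro j m hm k hk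
      rw [hAdef] at hm hk
      simp only [Finset.mem_Ico] at hm hk
      exact lt_of_lt_of_le hm.2 hk.1
    · intro j
      rw [hudef]
      exact (Finset.sum_congr rfl (fun n hn => by rw [haadef]; simp only; rw [hJ j n hn])).symm
  have hTpos : (0:ℝ) < ‖T‖ := lt_of_lt_of_le (by positivity) hTnorm
  refine ⟨u, w, hBlock, ⟨ε/2, 2*‖T‖+ε, by positivity, fun j => ⟨hu_low j, hu_up j⟩⟩,
    ⟨ε/‖T‖, 2, by positivity, fun j => ⟨?_, hw2 j⟩⟩, ?_⟩
  · rw [div_le_iff₀ hTpos]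
    calc ε ≤ ‖x j‖ := hxlow j
      _ ≤ ‖T‖ * ‖w j‖ := T.le_opNorm _
      _ = ‖w j‖ * ‖T‖ := mul_comm _ _
  -- the equivalence
  refine ⟨2, one_le_two, fun a' s => ?_⟩
  show 2⁻¹ * ‖∑ j ∈ s, a' j • x j‖ ≤ ‖∑ j ∈ s, a' j • u j‖ ∧
    ‖∑ j ∈ s, a' j • u j‖ ≤ 2 * ‖∑ j ∈ s, a' j • x j‖
  set S : X := ∑ j ∈ s, a' j • u j with hSdef
  set D : X := ∑ j ∈ s, a' j • x j with hDdef
  -- the global coefficient sequence of S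
  set b : ℕ → ℝ := fun n => ∑ j ∈ s, (if n ∈ A j then a' j * cf he (x j) n else 0) with hbdef
  set g : ℕ → X := fun N => ∑ n ∈ Finset.range N, b n • e n with hgdef
  have hg : ∀ N, g N = ∑ j ∈ s,
      ∑ n ∈ Finset.Ico (NN j) (N ⊓ NN (j+1)), (a' j * cf he (x j) n) • e n := by
    intro N
    rw [hgdef]
    simp only
    calc ∑ n ∈ Finset.range N, b n • e n
        = ∑ n ∈ Finset.range N, ∑ j ∈ s,
            (if n ∈ A j then (a' j * cf he (x j) n) • e n else 0) := by
          refine Finset.sum_congr rfl (fun n _ => ?_)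
          rw [hbdef]
          simp only
          rw [Finset.sum_smul]
          refine Finset.sum_congr rfl (fun j _ => ?_)
          split <;> simp
      _ = ∑ j ∈ s, ∑ n ∈ Finset.range N,
            (if n ∈ A j then (a' j * cf he (x j) n) • e n else 0) := Finset.sum_comm
      _ = ∑ j ∈ s, ∑ n ∈ Finset.range N ∩ A j, (a' j * cf he (x j) n) • e n := by
          refine Finset.sum_congr rfl (fun j _ => ?_)
          exact Finset.sum_ite_mem _ _ _
      _ = ∑ j ∈ s, ∑ n ∈ Finset.Ico (NN j) (N ⊓ NN (j+1)), (a' j * cf he (x j) n) • e n := by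
          refine Finset.sum_congr rfl (fun j _ => ?_)
          congr 1
          rw [hAdef]
          simp only
          rw [Finset.range_eq_Ico, Finset.Ico_inter_Ico]
          congr 1
  have hfull : ∀ j, ∑ n ∈ Finset.Ico (NN j) (NN (j+1)), (a' j * cf he (x j) n) • e n
      = a' j • u j := by
    intro j
    rw [hudef]
    simp only
    rw [Finset.smul_sum]
    exact Finset.sum_congr rfl (fun n _ => by rw [mul_smul])
  have hgS : ∀ N ≥ s.sup (fun j => NN (j+1)), g N = S := by
    intro N hN
    rw [hg N, hSdef]
    refine Finset.sum_congr rfl (fun j hj => ?_)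
    have h1 : NN (j+1) ≤ N := le_trans (Finset.le_sup (f := fun j => NN (j+1)) hj) hN
    rw [min_eq_right h1]  -- N ⊓ NN (j+1) = NN (j+1)
    exact hfull j
  have htendg : Filter.Tendsto g Filter.atTop (nhds S) := tendsto_atTop_of_eventually_const hgS
  have hgbd : ∀ N, ‖g N‖ ≤ C * ‖S‖ := fun N => hC S b htendg N
  have hcoef : ∀ j ∈ s, ‖a' j • u j‖ ≤ 2 * C * ‖S‖ := by
    intro j hj
    have hkey : a' j • u j = g (NN (j+1)) - g (NN j) := by
      rw [hg (NN (j+1)), hg (NN j), ← Finset.sum_sub_distrib]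
      rw [Finset.sum_eq_single j ?_ (fun h => absurd hj h)]
      · rw [min_self, min_eq_left (hlt j).le, Finset.Ico_self, Finset.sum_empty, sub_zero]
        exact (hfull j).symm
      · intro j' _ hj'ne
        rcases lt_or_gt_of_ne hj'ne with h | h
        · have h1 : NN (j'+1) ≤ NN j := hNNmono.monotone (Nat.succ_le_of_lt h)
          have h2 : NN (j'+1) ≤ NN (j+1) := le_trans h1 (hlt j).le
          rw [min_eq_right h2, min_eq_right h1, sub_self]
        · have h1 : NN (j+1) ≤ NN j' := hNNmono.monotone (Nat.succ_le_of_lt h)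
          have e1 : Finset.Ico (NN j') (NN (j+1) ⊓ NN (j'+1)) = ∅ :=
            Finset.Ico_eq_empty (not_lt.mpr (le_trans inf_le_left h1))
          have e2 : Finset.Ico (NN j') (NN j ⊓ NN (j'+1)) = ∅ :=
            Finset.Ico_eq_empty (not_lt.mpr (le_trans inf_le_left
              (hNNmono.monotone (le_of_lt h))))
          rw [e1, e2]
          simp
    rw [hkey]
    calc ‖g (NN (j+1)) - g (NN j)‖ ≤ ‖g (NN (j+1))‖ + ‖g (NN j)‖ := norm_sub_le _ _
      _ ≤ C * ‖S‖ + C * ‖S‖ := add_le_add (hgbd _) (hgbd _)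
      _ = 2 * C * ‖S‖ := by ring
  have habs : ∀ j ∈ s, |a' j| ≤ 4 * C * ‖S‖ / ε := by
    intro j hj
    have h1 := hcoef j hj
    rw [norm_smul, Real.norm_eq_abs] at h1
    have h2 := hu_low j
    have h3 : |a' j| * (ε / 2) ≤ 2 * C * ‖S‖ := by
      calc |a' j| * (ε / 2) ≤ |a' j| * ‖u j‖ :=
            mul_le_mul_of_nonneg_left h2 (abs_nonneg _)
        _ ≤ 2 * C * ‖S‖ := h1
    rw [le_div_iff₀ hε]
    nlinarith [abs_nonneg (a' j)]
  have hsumδ : ∑ j ∈ s, δ j ≤ ε / (32 * C) * 2 := by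
    have h1 : ∑ j ∈ s, δ j = ε / (32 * C) * ∑ j ∈ s, (1/2:ℝ)^j := by
      rw [Finset.mul_sum]
    rw [h1]
    have h2 : ∑ j ∈ s, (1/2:ℝ)^j ≤ 2 := by
      have hsub : s ⊆ Finset.range (s.sup id + 1) := by
        intro j hj
        simp only [Finset.mem_range]
        exact Nat.lt_succ_of_le (Finset.le_sup (f := id) hj)
      calc ∑ j ∈ s, (1/2:ℝ)^j ≤ ∑ j ∈ Finset.range (s.sup id + 1), (1/2:ℝ)^j :=
            Finset.sum_le_sum_of_subset_of_nonneg hsub (fun i _ _ => by positivity)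
        _ ≤ 2 := sum_geometric_two_le _
    have h3 : (0:ℝ) ≤ ε / (32 * C) := by positivity
    nlinarith
  have hDS : ‖D - S‖ ≤ 2⁻¹ * ‖S‖ := by
    have h0 : D - S = ∑ j ∈ s, a' j • (x j - u j) := by
      rw [hDdef, hSdef, ← Finset.sum_sub_distrib]
      exact Finset.sum_congr rfl (fun j _ => (smul_sub _ _ _).symm)
    rw [h0]
    calc ‖∑ j ∈ s, a' j • (x j - u j)‖ ≤ ∑ j ∈ s, ‖a' j • (x j - u j)‖ := norm_sum_le _ _
      _ ≤ ∑ j ∈ s, (4 * C * ‖S‖ / ε) * (2 * δ j) := by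
          refine Finset.sum_le_sum (fun j hj => ?_)
          rw [norm_smul, Real.norm_eq_abs]
          have h1 : ‖x j - u j‖ ≤ 2 * δ j := by rw [norm_sub_rev]; exact hux j
          exact mul_le_mul (habs j hj) h1 (norm_nonneg _) (by positivity)
      _ = (8 * C * ‖S‖ / ε) * ∑ j ∈ s, δ j := by
          rw [Finset.mul_sum]
          exact Finset.sum_congr rfl (fun j _ => by ring)
      _ ≤ (8 * C * ‖S‖ / ε) * (ε / (32 * C) * 2) := by
          apply mul_le_mul_of_nonneg_left hsumδ
          positivity
      _ = 2⁻¹ * ‖S‖ := by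
          field_simp
          ring
  constructor
  · have h1 : ‖D‖ ≤ ‖S‖ + ‖D - S‖ := by
      calc ‖D‖ = ‖S + (D - S)‖ := by congr 1; abel
        _ ≤ ‖S‖ + ‖D - S‖ := norm_add_le _ _
    nlinarith [norm_nonneg D, norm_nonneg S]
  · have h1 : ‖S‖ ≤ ‖D‖ + ‖D - S‖ := by
      calc ‖S‖ = ‖D - (D - S)‖ := by congr 1; abel
        _ ≤ ‖D‖ + ‖D - S‖ := norm_sub_le _ _
    nlinarith [norm_nonneg D, norm_nonneg S]

end Stmt0Aux


theorem statement0 {X Y : Type*} [NormedAddCommGroup X] [NormedSpace ℝ X] [CompleteSpace X]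
    [NormedAddCommGroup Y] [NormedSpace ℝ Y] [CompleteSpace Y]
    (T : Y →L[ℝ] X) (hT : ¬ CompactOp T) (e : ℕ → X) (he : IsSchauderBasis e) :
    ∃ (u : ℕ → X) (v : ℕ → Y), IsBlockBasic e u ∧ SemiNormalized u ∧
      SemiNormalized v ∧ SeqEquiv u (fun j => T (v j)) := by
  obtain ⟨C, hC1, hC⟩ := Stmt0Aux.supBound e he
  obtain ⟨ε, hε, v', hv', hsep⟩ := Stmt0Aux.exists_sep_in_ball T hT
  exact Stmt0Aux.core he C hC1 hC T v' hv' ε hε hsep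
end

section
/- Let X and Y be real Banach spaces, let T : Y → X be a bounded linear operator that is not compact, and suppose X has a Schauder basis (e_n)_{n∈ℕ} and Y has a Schauder basis (y_n)_{n∈ℕ}. Then there exist a semi-normalized block basic sequence (u_j)_{j∈ℕ} in X with respect to (e_n) and a semi-normalized block basic sequence (v_j)_{j∈ℕ} in Y with respect to (y_n) such that (u_j) is equivalent to (T v_j). -/
open scoped BigOperators

open Filter Topology BoundedContinuousFunction

lemma schauder_coords {X : Type*} [NormedAddCommGroup X] [NormedSpace ℝ X] [CompleteSpace X]
    (e : ℕ → X) (he : IsSchauderBasis e) :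
    ∃ (c : X → ℕ → ℝ) (K : ℝ), 1 ≤ K ∧
      (∀ x, Filter.Tendsto (fun N => ∑ n ∈ Finset.range N, c x n • e n) Filter.atTop (nhds x)) ∧
      (∀ x N, ‖∑ n ∈ Finset.range N, c x n • e n‖ ≤ K * ‖x‖) ∧
      (∀ x a, Filter.Tendsto (fun N => ∑ n ∈ Finset.range N, a n • e n) Filter.atTop (nhds x)
        → a = c x) := by
  classical
  set c : X → ℕ → ℝ := fun x => (he x).exists.choose with hcdef
  have hc : ∀ x, Filter.Tendsto (fun N => ∑ n ∈ Finset.range N, c x n • e n)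
      Filter.atTop (nhds x) := fun x => (he x).exists.choose_spec
  have huniq : ∀ x a, Filter.Tendsto (fun N => ∑ n ∈ Finset.range N, a n • e n)
      Filter.atTop (nhds x) → a = c x := fun x a ha => (he x).unique ha (hc x)
  -- the Banach space D of partial-sum functions
  set D : Submodule ℝ (ℕ →ᵇ X) :=
    { carrier := {g | g 0 = 0 ∧ (∀ N, g (N+1) - g N ∈ Submodule.span ℝ {e N}) ∧ CauchySeq ⇑g}
      add_mem' := by
        rintro g g' ⟨h0, h1, h2⟩ ⟨h0', h1', h2'⟩
        refine ⟨by simp [h0, h0'], fun N => ?_, ?_⟩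
        · have : (g + g') (N+1) - (g + g') N = (g (N+1) - g N) + (g' (N+1) - g' N) := by
            simp; abel
          rw [this]; exact Submodule.add_mem _ (h1 N) (h1' N)
        · have : ⇑(g + g') = ⇑g + ⇑g' := rfl
          rw [this]; exact h2.add h2'
      zero_mem' := by
        refine ⟨rfl, fun N => by simp [Submodule.zero_mem], cauchySeq_const 0⟩
      smul_mem' := by
        rintro r g ⟨h0, h1, h2⟩
        refine ⟨by simp [h0], fun N => ?_, ?_⟩
        · have : (r • g) (N+1) - (r • g) N = r • (g (N+1) - g N) := by
            simp [smul_sub]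
          rw [this]; exact Submodule.smul_mem _ _ (h1 N)
        · obtain ⟨x, hx⟩ := cauchySeq_tendsto_of_complete h2
          exact (hx.const_smul r).cauchySeq } with hDdef
  have hDclosed : IsClosed (D : Set (ℕ →ᵇ X)) := by
    have h0 : IsClosed {g : ℕ →ᵇ X | g 0 = 0} :=
      isClosed_eq ((lipschitz_eval_const (0:ℕ)).continuous) continuous_const
    have h1 : ∀ N : ℕ, IsClosed {g : ℕ →ᵇ X | g (N+1) - g N ∈ Submodule.span ℝ {e N}} := by
      intro N
      have : Continuous fun g : ℕ →ᵇ X => g (N+1) - g N :=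
        ((lipschitz_eval_const (N+1)).continuous).sub ((lipschitz_eval_const N).continuous)
      exact IsClosed.preimage this (Submodule.span ℝ {e N}).closed_of_finiteDimensional
    have h2 : IsClosed {g : ℕ →ᵇ X | CauchySeq ⇑g} := by
      refine IsSeqClosed.isClosed ?_
      intro gs g hgs hlim
      simp only [Set.mem_setOf_eq] at hgs ⊢
      rw [Metric.cauchySeq_iff]
      intro ε hε
      obtain ⟨i, hi⟩ : ∃ i, dist (gs i) g < ε/3 := by
        obtain ⟨i, hi⟩ := (Metric.tendsto_atTop.mp hlim) (ε/3) (by linarith)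
        exact ⟨i, hi i le_rfl⟩
      obtain ⟨Nn, hNn⟩ := Metric.cauchySeq_iff.mp (hgs i) (ε/3) (by linarith)
      refine ⟨Nn, fun m hm n hn => ?_⟩
      have h1' : dist (g m) (gs i m) ≤ dist (gs i) g := by
        rw [dist_comm]; exact BoundedContinuousFunction.dist_coe_le_dist m
      have h2' : dist (gs i n) (g n) ≤ dist (gs i) g :=
        BoundedContinuousFunction.dist_coe_le_dist n
      have h3' := hNn m hm n hn
      calc dist (g m) (g n)
          ≤ dist (g m) (gs i m) + dist (gs i m) (gs i n) + dist (gs i n) (g n) :=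
            dist_triangle4 _ _ _ _
        _ < ε/3 + ε/3 + ε/3 := by
            have := lt_of_le_of_lt h1' hi
            have := lt_of_le_of_lt h2' hi
            linarith
        _ = ε := by ring
    have : (D : Set (ℕ →ᵇ X)) =
        {g : ℕ →ᵇ X | g 0 = 0} ∩ ((⋂ N, {g : ℕ →ᵇ X | g (N+1) - g N ∈ Submodule.span ℝ {e N}})
          ∩ {g : ℕ →ᵇ X | CauchySeq ⇑g}) := by
      ext g; simp only [hDdef]; constructor
      · rintro ⟨a, b, c⟩; exact ⟨a, Set.mem_iInter.mpr b, c⟩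
      · rintro ⟨a, b, c⟩; exact ⟨a, Set.mem_iInter.mp b, c⟩
    rw [this]
    exact h0.inter ((isClosed_iInter h1).inter h2)
  haveI : CompleteSpace D := hDclosed.completeSpace_coe
  -- coefficients of an element of D
  have hmem : ∀ g : D, (g : ℕ →ᵇ X) 0 = 0 ∧
      (∀ N, (g : ℕ →ᵇ X) (N+1) - (g : ℕ →ᵇ X) N ∈ Submodule.span ℝ {e N}) ∧
      CauchySeq ⇑(g : ℕ →ᵇ X) := fun g => g.2
  -- limit map
  have hlimex : ∀ g : D, ∃ x : X, Tendsto ⇑(g : ℕ →ᵇ X) atTop (𝓝 x) :=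
    fun g => cauchySeq_tendsto_of_complete (hmem g).2.2
  set l : D → X := fun g => (hlimex g).choose with hldef
  have hl : ∀ g : D, Tendsto ⇑(g : ℕ →ᵇ X) atTop (𝓝 (l g)) := fun g => (hlimex g).choose_spec
  have hladd : ∀ g g' : D, l (g + g') = l g + l g' := by
    intro g g'
    refine tendsto_nhds_unique (hl (g + g')) ?_
    have : ⇑((g + g' : D) : ℕ →ᵇ X) = fun N => (g : ℕ →ᵇ X) N + (g' : ℕ →ᵇ X) N := rfl
    rw [this]
    exact (hl g).add (hl g')
  have hlsmul : ∀ (r : ℝ) (g : D), l (r • g) = r • l g := by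
    intro r g
    refine tendsto_nhds_unique (hl (r • g)) ?_
    have : ⇑((r • g : D) : ℕ →ᵇ X) = fun N => r • (g : ℕ →ᵇ X) N := rfl
    rw [this]
    exact (hl g).const_smul r
  set Φ₀ : D →ₗ[ℝ] X :=
    { toFun := l, map_add' := hladd, map_smul' := hlsmul } with hΦ₀def
  have hΦ₀bound : ∀ g : D, ‖Φ₀ g‖ ≤ 1 * ‖g‖ := by
    intro g
    rw [one_mul]
    refine le_of_tendsto (hl g).norm (Filter.Eventually.of_forall fun N => ?_)
    exact ((g : ℕ →ᵇ X).norm_coe_le_norm N)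
  set Φ : D →L[ℝ] X := LinearMap.mkContinuous Φ₀ 1 hΦ₀bound with hΦdef
  -- representation of elements of D by coefficients
  have hrep : ∀ g : D, ∃ a : ℕ → ℝ,
      ∀ N, (g : ℕ →ᵇ X) N = ∑ n ∈ Finset.range N, a n • e n := by
    intro g
    have hex : ∀ N, ∃ r : ℝ, r • e N = (g : ℕ →ᵇ X) (N+1) - (g : ℕ →ᵇ X) N :=
      fun N => Submodule.mem_span_singleton.mp ((hmem g).2.1 N)
    refine ⟨fun N => (hex N).choose, ?_⟩
    intro N
    induction N with
    | zero => simpa using (hmem g).1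
    | succ N ih =>
        rw [Finset.sum_range_succ, ← ih, (hex N).choose_spec]
        abel
  -- Φ is bijective
  have hker : Φ.ker = ⊥ := by
    rw [LinearMap.ker_eq_bot']
    intro g hg
    obtain ⟨a, ha⟩ := hrep g
    have htend : Tendsto (fun N => ∑ n ∈ Finset.range N, a n • e n) atTop (𝓝 0) := by
      have := hl g
      rw [show l g = (0 : X) from hg] at this
      exact this.congr (fun N => ha N)
    have h0 : (fun _ : ℕ => (0:ℝ)) = c 0 := by
      refine huniq 0 _ ?_
      simpa using (tendsto_const_nhds : Tendsto (fun _ : ℕ => (0:X)) atTop (𝓝 0))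
    have ha0 : a = fun _ => (0:ℝ) := by rw [huniq 0 a htend, ← h0]
    apply Subtype.ext
    apply BoundedContinuousFunction.ext
    intro N
    simp [ha N, ha0]
  have hrange : Φ.range = ⊤ := by
    rw [LinearMap.range_eq_top]
    intro x
    set f : ℕ → X := fun N => ∑ n ∈ Finset.range N, c x n • e n with hfdef
    have hfc : CauchySeq f := (hc x).cauchySeq
    obtain ⟨R, hRpos, hR⟩ := cauchySeq_bdd hfc
    have hbound : ∀ N, ‖f N‖ ≤ R := by
      intro N
      have := hR N 0
      simp only [hfdef] at this ⊢
      simpa [Finset.range_zero, dist_eq_norm] using this.le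
    set gbcf : ℕ →ᵇ X :=
      BoundedContinuousFunction.ofNormedAddCommGroup f continuous_of_discreteTopology R hbound
      with hgdef
    have hgcoe : ⇑gbcf = f := rfl
    have hgmem : gbcf ∈ D := by
      refine ⟨by simp [hgcoe, hfdef], fun N => ?_, by rw [hgcoe]; exact hfc⟩
      have : gbcf (N+1) - gbcf N = c x N • e N := by
        simp only [hgcoe, hfdef, Finset.sum_range_succ]; abel
      rw [this]
      exact Submodule.smul_mem _ _ (Submodule.mem_span_singleton_self _)
    refine ⟨⟨gbcf, hgmem⟩, ?_⟩
    have : Tendsto ⇑gbcf atTop (𝓝 x) := by rw [hgcoe]; exact hc x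
    exact tendsto_nhds_unique (hl ⟨gbcf, hgmem⟩) this
  set E := ContinuousLinearEquiv.ofBijective Φ hker hrange with hEdef
  set K : ℝ := max 1 ‖(E.symm : X →L[ℝ] D)‖ with hKdef
  refine ⟨c, K, le_max_left _ _, hc, ?_, huniq⟩
  intro x N
  set g : D := E.symm x with hgdef
  have hΦg : Φ g = x := by
    have := E.apply_symm_apply x
    rwa [show ⇑E = ⇑Φ from ContinuousLinearEquiv.coeFn_ofBijective Φ hker hrange] at this
  obtain ⟨a, ha⟩ := hrep g
  have htend : Tendsto (fun N => ∑ n ∈ Finset.range N, a n • e n) atTop (𝓝 x) := by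
    have := hl g
    rw [show l g = x from hΦg] at this
    exact this.congr (fun N => ha N)
  have hax : a = c x := huniq x a htend
  have h1 : ‖∑ n ∈ Finset.range N, c x n • e n‖ = ‖(g : ℕ →ᵇ X) N‖ := by
    rw [ha N, hax]
  rw [h1]
  calc ‖(g : ℕ →ᵇ X) N‖ ≤ ‖(g : ℕ →ᵇ X)‖ := (g : ℕ →ᵇ X).norm_coe_le_norm N
    _ = ‖g‖ := rfl
    _ = ‖(E.symm : X →L[ℝ] D) x‖ := by rw [hgdef]; rfl
    _ ≤ ‖(E.symm : X →L[ℝ] D)‖ * ‖x‖ := (E.symm : X →L[ℝ] D).le_opNorm x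
    _ ≤ K * ‖x‖ := by
        have : (0:ℝ) ≤ ‖x‖ := norm_nonneg x
        exact mul_le_mul_of_nonneg_right (le_max_right _ _) this



section Aux
variable {X Y : Type*} [NormedAddCommGroup X] [NormedSpace ℝ X] [CompleteSpace X]
    [NormedAddCommGroup Y] [NormedSpace ℝ Y] [CompleteSpace Y]

lemma coeff_finsum {e : ℕ → X} (cX : X → ℕ → ℝ)
    (hXu : ∀ x a, Filter.Tendsto (fun N => ∑ n ∈ Finset.range N, a n • e n) Filter.atTop (nhds x)
        → a = cX x)
    (hXt : ∀ x, Filter.Tendsto (fun N => ∑ n ∈ Finset.range N, cX x n • e n)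
      Filter.atTop (nhds x))
    (s : Finset ℕ) (aa : ℕ → ℝ) (xx : ℕ → X) :
    cX (∑ i ∈ s, aa i • xx i) = fun n => ∑ i ∈ s, aa i * cX (xx i) n := by
  symm
  apply hXu
  have h : ∀ N, ∑ n ∈ Finset.range N, (∑ i ∈ s, aa i * cX (xx i) n) • e n
      = ∑ i ∈ s, aa i • ∑ n ∈ Finset.range N, cX (xx i) n • e n := by
    intro N
    simp only [Finset.smul_sum, Finset.sum_smul, smul_smul]
    rw [Finset.sum_comm]
  have htend : Filter.Tendsto
      (fun N => ∑ n ∈ Finset.range N, (∑ i ∈ s, aa i * cX (xx i) n) • e n)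
      Filter.atTop (nhds (∑ i ∈ s, aa i • xx i)) := by
    simp only [h]
    exact tendsto_finset_sum _ fun i _ => ((hXt (xx i)).const_smul (aa i))
  exact htend



end Aux

set_option maxHeartbeats 2000000 in
theorem statement1 {X Y : Type*} [NormedAddCommGroup X] [NormedSpace ℝ X] [CompleteSpace X]
    [NormedAddCommGroup Y] [NormedSpace ℝ Y] [CompleteSpace Y]
    (T : Y →L[ℝ] X) (hT : ¬ CompactOp T)
    (e : ℕ → X) (he : IsSchauderBasis e) (y : ℕ → Y) (hy : IsSchauderBasis y) :
    ∃ (u : ℕ → X) (v : ℕ → Y), IsBlockBasic e u ∧ SemiNormalized u ∧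
      IsBlockBasic y v ∧ SemiNormalized v ∧ SeqEquiv u (fun j => T (v j)) := by
  classical
  obtain ⟨cX, K, hK1, hXt, hXb, hXu⟩ := schauder_coords e he
  obtain ⟨cY, K', hK'1, hYt, hYb, hYu⟩ := schauder_coords y hy
  -- basis vectors are nonzero, coordinates are bounded
  have henz : ∀ n, e n ≠ 0 := by
    intro n hn
    have h0 : (fun _ : ℕ => (0:ℝ)) = cX 0 := by
      refine hXu 0 _ ?_
      simpa using (tendsto_const_nhds : Filter.Tendsto (fun _ : ℕ => (0:X)) Filter.atTop (nhds 0))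
    have h1 : Function.update (fun _ : ℕ => (0:ℝ)) n 1 = cX 0 := by
      refine hXu 0 _ ?_
      have : ∀ N, ∑ m ∈ Finset.range N, (Function.update (fun _ : ℕ => (0:ℝ)) n 1) m • e m
          = (0 : X) := by
        intro N
        refine Finset.sum_eq_zero fun m _ => ?_
        by_cases hmn : m = n
        · subst hmn; rw [hn, smul_zero]
        · simp [Function.update_of_ne hmn]
      simpa [this] using
        (tendsto_const_nhds : Filter.Tendsto (fun _ : ℕ => (0:X)) Filter.atTop (nhds 0))
    have := h1.trans h0.symm
    have := congrFun this n
    simp at this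
  have hXcb : ∀ (x : X) (n : ℕ), |cX x n| * ‖e n‖ ≤ 2 * K * ‖x‖ := by
    intro x n
    have h1 : cX x n • e n = (∑ m ∈ Finset.range (n+1), cX x m • e m)
        - ∑ m ∈ Finset.range n, cX x m • e m := by
      rw [Finset.sum_range_succ]; abel
    have : ‖cX x n • e n‖ ≤ K * ‖x‖ + K * ‖x‖ := by
      rw [h1]
      exact (norm_sub_le _ _).trans (add_le_add (hXb x (n+1)) (hXb x n))
    rw [norm_smul, Real.norm_eq_abs] at this
    linarith
  have hYcb : ∀ (z : Y) (n : ℕ), |cY z n| * ‖y n‖ ≤ 2 * K' * ‖z‖ := by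
    intro z n
    have h1 : cY z n • y n = (∑ m ∈ Finset.range (n+1), cY z m • y m)
        - ∑ m ∈ Finset.range n, cY z m • y m := by
      rw [Finset.sum_range_succ]; abel
    have : ‖cY z n • y n‖ ≤ K' * ‖z‖ + K' * ‖z‖ := by
      rw [h1]
      exact (norm_sub_le _ _).trans (add_le_add (hYb z (n+1)) (hYb z n))
    rw [norm_smul, Real.norm_eq_abs] at this
    linarith
  have hynz : ∀ n, y n ≠ 0 := by
    intro n hn
    have h0 : (fun _ : ℕ => (0:ℝ)) = cY 0 := by
      refine hYu 0 _ ?_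
      simpa using (tendsto_const_nhds : Filter.Tendsto (fun _ : ℕ => (0:Y)) Filter.atTop (nhds 0))
    have h1 : Function.update (fun _ : ℕ => (0:ℝ)) n 1 = cY 0 := by
      refine hYu 0 _ ?_
      have : ∀ N, ∑ m ∈ Finset.range N, (Function.update (fun _ : ℕ => (0:ℝ)) n 1) m • y m
          = (0 : Y) := by
        intro N
        refine Finset.sum_eq_zero fun m _ => ?_
        by_cases hmn : m = n
        · subst hmn; rw [hn, smul_zero]
        · simp [Function.update_of_ne hmn]
      simpa [this] using
        (tendsto_const_nhds : Filter.Tendsto (fun _ : ℕ => (0:Y)) Filter.atTop (nhds 0))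
    have := h1.trans h0.symm
    have := congrFun this n
    simp at this
  -- difference rule for coefficients
  have hXsub : ∀ x x' : X, cX (x - x') = fun n => cX x n - cX x' n := by
    intro x x'
    symm; apply hXu
    have := (hXt x).sub (hXt x')
    refine this.congr fun N => ?_
    rw [← Finset.sum_sub_distrib]
    exact Finset.sum_congr rfl fun n _ => (sub_smul _ _ _).symm
  have hYsub : ∀ z z' : Y, cY (z - z') = fun n => cY z n - cY z' n := by
    intro z z'
    symm; apply hYu
    have := (hYt z).sub (hYt z')
    refine this.congr fun N => ?_
    rw [← Finset.sum_sub_distrib]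
    exact Finset.sum_congr rfl fun n _ => (sub_smul _ _ _).symm
  -- step 2 : a separated sequence in the image of the unit ball
  obtain ⟨ε, hε, hsep⟩ : ∃ ε > (0:ℝ), ∀ t : Set X, t.Finite →
      ¬ (T '' Metric.closedBall 0 1 ⊆ ⋃ z ∈ t, Metric.ball z ε) := by
    have h1 : ¬ TotallyBounded (T '' Metric.closedBall 0 1) := by
      intro h
      exact hT (isCompact_iff_totallyBounded_isComplete.mpr
        ⟨h.closure, isClosed_closure.isComplete⟩)
    rw [Metric.totallyBounded_iff] at h1
    push_neg at h1
    obtain ⟨ε, hε, h2⟩ := h1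
    exact ⟨ε, hε, fun t ht hsub => h2 t ht hsub⟩
  obtain ⟨w, hw1, hwsep⟩ : ∃ w : ℕ → Y, (∀ k, ‖w k‖ ≤ 1) ∧
      Pairwise (fun i j => ε ≤ ‖T (w i) - T (w j)‖) := by
    set r : Y → Y → Prop := fun a b => ε ≤ ‖T a - T b‖ with hrdef
    haveI : Std.Symm r := ⟨fun a b h => by rwa [hrdef, ← norm_neg, neg_sub] at h⟩
    have hstep : ∀ s : Finset Y, (∀ x ∈ s, ‖x‖ ≤ 1) → ∃ v, ‖v‖ ≤ 1 ∧ ∀ x ∈ s, r x v := by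
      intro s hs
      have := hsep (T '' (s : Set Y)) ((s.finite_toSet).image _)
      rw [Set.not_subset] at this
      obtain ⟨p, hp, hp2⟩ := this
      obtain ⟨v, hv, rfl⟩ := hp
      refine ⟨v, by rwa [← mem_closedBall_zero_iff (a := v)] , fun x hx => ?_⟩
      have : T v ∉ Metric.ball (T x) ε := by
        intro hmem
        exact hp2 (Set.mem_biUnion (Set.mem_image_of_mem _ hx) hmem)
      rw [Metric.mem_ball, dist_eq_norm] at this
      push_neg at this
      rw [hrdef]
      calc ε ≤ ‖T v - T x‖ := this
        _ = ‖T x - T v‖ := by rw [← norm_neg, neg_sub]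
    obtain ⟨f, hf, hf'⟩ := exists_seq_of_forall_finset_exists' (fun a : Y => ‖a‖ ≤ 1) r hstep
    exact ⟨f, hf, hf'⟩
  have hTpos : 0 < ‖T‖ := by
    by_contra h
    push_neg at h
    have hT0 : ‖T‖ = 0 := le_antisymm h (norm_nonneg _)
    have := hwsep (Nat.zero_ne_one)
    have h01 : ‖T (w 0) - T (w 1)‖ ≤ 0 := by
      rw [← map_sub]
      calc ‖T (w 0 - w 1)‖ ≤ ‖T‖ * ‖w 0 - w 1‖ := T.le_opNorm _
        _ = 0 := by rw [hT0, zero_mul]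
    linarith
  -- step 3 : diagonal subsequence with both coordinate families converging
  obtain ⟨L, _, φ, hφ, hφt⟩ : ∃ L ∈ ((Set.univ : Set ℕ).pi fun n =>
        Set.Icc (-(2 * K' / ‖y n‖)) (2 * K' / ‖y n‖)) ×ˢ
        ((Set.univ : Set ℕ).pi fun n =>
        Set.Icc (-(2 * K * ‖T‖ / ‖e n‖)) (2 * K * ‖T‖ / ‖e n‖)),
      ∃ φ : ℕ → ℕ, StrictMono φ ∧ Filter.Tendsto
        ((fun k => (fun n => cY (w k) n, fun n => cX (T (w k)) n)) ∘ φ) Filter.atTop (nhds L) := by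
    apply IsCompact.tendsto_subseq
    · exact ((isCompact_univ_pi fun n => isCompact_Icc).prod
        (isCompact_univ_pi fun n => isCompact_Icc))
    · intro k
      constructor
      · intro n _
        have hb := hYcb (w k) n
        have hyn : 0 < ‖y n‖ := norm_pos_iff.mpr (hynz n)
        have : |cY (w k) n| ≤ 2 * K' / ‖y n‖ := by
          rw [le_div_iff₀ hyn]
          calc |cY (w k) n| * ‖y n‖ ≤ 2 * K' * ‖w k‖ := hb
            _ ≤ 2 * K' * 1 := by
                have : (0:ℝ) ≤ 2 * K' := by linarith
                exact mul_le_mul_of_nonneg_left (hw1 k) this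
            _ = 2 * K' := mul_one _
        exact abs_le.mp this
      · intro n _
        have hb := hXcb (T (w k)) n
        have hen : 0 < ‖e n‖ := norm_pos_iff.mpr (henz n)
        have hTw : ‖T (w k)‖ ≤ ‖T‖ := by
          calc ‖T (w k)‖ ≤ ‖T‖ * ‖w k‖ := T.le_opNorm _
            _ ≤ ‖T‖ * 1 := mul_le_mul_of_nonneg_left (hw1 k) (norm_nonneg _)
            _ = ‖T‖ := mul_one _
        have : |cX (T (w k)) n| ≤ 2 * K * ‖T‖ / ‖e n‖ := by
          rw [le_div_iff₀ hen]
          calc |cX (T (w k)) n| * ‖e n‖ ≤ 2 * K * ‖T (w k)‖ := hb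
            _ ≤ 2 * K * ‖T‖ := by
                have : (0:ℝ) ≤ 2 * K := by linarith
                exact mul_le_mul_of_nonneg_left hTw this
        exact abs_le.mp this
  -- the difference sequence
  set z : ℕ → Y := fun k => w (φ (2*k+1)) - w (φ (2*k)) with hzdef
  have hznorm : ∀ k, ‖z k‖ ≤ 2 := by
    intro k
    calc ‖z k‖ ≤ ‖w (φ (2*k+1))‖ + ‖w (φ (2*k))‖ := norm_sub_le _ _
      _ ≤ 1 + 1 := add_le_add (hw1 _) (hw1 _)
      _ = 2 := by norm_num
  have hTz : ∀ k, ε ≤ ‖T (z k)‖ := by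
    intro k
    have hne : φ (2*k+1) ≠ φ (2*k) := by
      intro h
      exact absurd (hφ.injective h) (by omega)
    have := hwsep hne
    rwa [hzdef, map_sub]
  -- coordinates of z (and of T z) tend to zero
  have hYcoord : ∀ n, Filter.Tendsto (fun k => cY (z k) n) Filter.atTop (nhds 0) := by
    intro n
    have hev : ∀ j : ℕ, Filter.Tendsto (fun k => cY (w (φ (2*k+j))) n) Filter.atTop
        (nhds (L.1 n)) := by
      intro j
      have h1 : Filter.Tendsto (fun i => cY (w (φ i)) n) Filter.atTop (nhds (L.1 n)) := by
        have hc : Continuous fun p : (ℕ → ℝ) × (ℕ → ℝ) => p.1 n :=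
          (continuous_apply n).comp continuous_fst
        exact (hc.tendsto L).comp hφt
      refine h1.comp (Filter.tendsto_atTop_mono (f := fun k : ℕ => k)
        (fun k => by show k ≤ 2*k+j; omega) Filter.tendsto_id)
    have := (hev 1).sub (hev 0)
    rw [sub_self] at this
    refine this.congr fun k => ?_
    rw [hzdef]
    simp only []
    rw [hYsub]; norm_num
  have hXcoord : ∀ n, Filter.Tendsto (fun k => cX (T (z k)) n) Filter.atTop (nhds 0) := by
    intro n
    have hev : ∀ j : ℕ, Filter.Tendsto (fun k => cX (T (w (φ (2*k+j)))) n) Filter.atTop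
        (nhds (L.2 n)) := by
      intro j
      have h1 : Filter.Tendsto (fun i => cX (T (w (φ i))) n) Filter.atTop (nhds (L.2 n)) := by
        have hc : Continuous fun p : (ℕ → ℝ) × (ℕ → ℝ) => p.2 n :=
          (continuous_apply n).comp continuous_snd
        exact (hc.tendsto L).comp hφt
      refine h1.comp (Filter.tendsto_atTop_mono (f := fun k : ℕ => k)
        (fun k => by show k ≤ 2*k+j; omega) Filter.tendsto_id)
    have := (hev 1).sub (hev 0)
    rw [sub_self] at this
    refine this.congr fun k => ?_
    rw [hzdef]
    simp only []
    rw [map_sub, hXsub]; norm_num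
  -- step 4/5 : gliding hump
  set η : ℕ → ℝ := fun j => ε / (2^(j+6) * K * (1+‖T‖)) with hηdef
  have hηpos : ∀ j, 0 < η j := by
    intro j
    apply div_pos hε
    apply mul_pos (mul_pos (pow_pos two_pos _) (by linarith)) (by positivity)
  have hstep : ∀ j N M : ℕ, ∃ p : ℕ × ℕ × ℕ, N < p.2.1 ∧ M < p.2.2 ∧
      ‖∑ n ∈ Finset.range N, cY (z p.1) n • y n‖ < η j ∧
      ‖∑ n ∈ Finset.range M, cX (T (z p.1)) n • e n‖ < η j ∧
      ‖z p.1 - ∑ n ∈ Finset.range p.2.1, cY (z p.1) n • y n‖ < η j ∧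
      ‖T (z p.1) - ∑ n ∈ Finset.range p.2.2, cX (T (z p.1)) n • e n‖ < η j := by
    intro j N M
    have e1 : Filter.Tendsto (fun k => ‖∑ n ∈ Finset.range N, cY (z k) n • y n‖)
        Filter.atTop (nhds 0) := by
      have : Filter.Tendsto (fun k => ∑ n ∈ Finset.range N, cY (z k) n • y n)
          Filter.atTop (nhds 0) := by
        have := tendsto_finset_sum (Finset.range N)
          (fun n _ => (hYcoord n).smul_const (y n))
        simpa using this
      simpa using this.norm
    have e2 : Filter.Tendsto (fun k => ‖∑ n ∈ Finset.range M, cX (T (z k)) n • e n‖)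
        Filter.atTop (nhds 0) := by
      have : Filter.Tendsto (fun k => ∑ n ∈ Finset.range M, cX (T (z k)) n • e n)
          Filter.atTop (nhds 0) := by
        have := tendsto_finset_sum (Finset.range M)
          (fun n _ => (hXcoord n).smul_const (e n))
        simpa using this
      simpa using this.norm
    obtain ⟨kk, hkk1, hkk2⟩ :=
      ((e1.eventually_lt_const (hηpos j)).and (e2.eventually_lt_const (hηpos j))).exists
    have e3 : Filter.Tendsto (fun Nn => ‖z kk - ∑ n ∈ Finset.range Nn, cY (z kk) n • y n‖)
        Filter.atTop (nhds 0) := by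
      have := (tendsto_const_nhds (x := z kk) (f := Filter.atTop (α := ℕ))).sub (hYt (z kk))
      simpa using this.norm
    obtain ⟨N', hN'1, hN'2⟩ :=
      ((e3.eventually_lt_const (hηpos j)).and (eventually_gt_atTop N)).exists
    have e4 : Filter.Tendsto
        (fun Mn => ‖T (z kk) - ∑ n ∈ Finset.range Mn, cX (T (z kk)) n • e n‖)
        Filter.atTop (nhds 0) := by
      have := (tendsto_const_nhds (x := T (z kk)) (f := Filter.atTop (α := ℕ))).sub
        (hXt (T (z kk)))
      simpa using this.norm
    obtain ⟨M', hM'1, hM'2⟩ :=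
      ((e4.eventually_lt_const (hηpos j)).and (eventually_gt_atTop M)).exists
    exact ⟨(kk, N', M'), hN'2, hM'2, hkk1, hkk2, hN'1, hM'1⟩
  -- construct the sequences of indices
  set F : ℕ → ℕ × ℕ := fun j =>
    Nat.rec (0, 0) (fun j' prev => (hstep j' prev.1 prev.2).choose.2) j with hFdef
  set NN : ℕ → ℕ := fun j => (F j).1 with hNNdef
  set MM : ℕ → ℕ := fun j => (F j).2 with hMMdef
  set kk : ℕ → ℕ := fun j => (hstep j (NN j) (MM j)).choose.1 with hkkdef
  have hFsucc : ∀ j, F (j+1) = (hstep j (NN j) (MM j)).choose.2 := fun j => rfl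
  have hprop : ∀ j, NN j < NN (j+1) ∧ MM j < MM (j+1) ∧
      ‖∑ n ∈ Finset.range (NN j), cY (z (kk j)) n • y n‖ < η j ∧
      ‖∑ n ∈ Finset.range (MM j), cX (T (z (kk j))) n • e n‖ < η j ∧
      ‖z (kk j) - ∑ n ∈ Finset.range (NN (j+1)), cY (z (kk j)) n • y n‖ < η j ∧
      ‖T (z (kk j)) - ∑ n ∈ Finset.range (MM (j+1)), cX (T (z (kk j))) n • e n‖ < η j := by
    intro j
    have hs := (hstep j (NN j) (MM j)).choose_spec
    have h1 : NN (j+1) = (hstep j (NN j) (MM j)).choose.2.1 := rfl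
    have h2 : MM (j+1) = (hstep j (NN j) (MM j)).choose.2.2 := rfl
    rw [h1, h2]
    exact ⟨hs.1, hs.2.1, hs.2.2.1, hs.2.2.2.1, hs.2.2.2.2.1, hs.2.2.2.2.2⟩
  have hNmono : StrictMono NN := strictMono_nat_of_lt_succ fun j => (hprop j).1
  have hMmono : StrictMono MM := strictMono_nat_of_lt_succ fun j => (hprop j).2.1
  -- the block sequences
  set v : ℕ → Y := fun j => ∑ n ∈ Finset.Ico (NN j) (NN (j+1)), cY (z (kk j)) n • y n
    with hvdef
  set u : ℕ → X := fun j => ∑ n ∈ Finset.Ico (MM j) (MM (j+1)), cX (T (z (kk j))) n • e n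
    with hudef
  have hvz : ∀ j, ‖v j - z (kk j)‖ ≤ 2 * η j := by
    intro j
    have hsub : v j - z (kk j) =
        -(z (kk j) - ∑ n ∈ Finset.range (NN (j+1)), cY (z (kk j)) n • y n)
          - ∑ n ∈ Finset.range (NN j), cY (z (kk j)) n • y n := by
      rw [hvdef]
      simp only []
      rw [Finset.sum_Ico_eq_sub _ (hNmono (Nat.lt_succ_self j)).le]
      abel
    rw [hsub]
    calc ‖_ - _‖ ≤ ‖-(z (kk j) - ∑ n ∈ Finset.range (NN (j+1)), cY (z (kk j)) n • y n)‖
        + ‖∑ n ∈ Finset.range (NN j), cY (z (kk j)) n • y n‖ := norm_sub_le _ _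
      _ ≤ η j + η j := by
          rw [norm_neg]
          exact add_le_add (hprop j).2.2.2.2.1.le (hprop j).2.2.1.le
      _ = 2 * η j := by ring
  have huz : ∀ j, ‖u j - T (z (kk j))‖ ≤ 2 * η j := by
    intro j
    have hsub : u j - T (z (kk j)) =
        -(T (z (kk j)) - ∑ n ∈ Finset.range (MM (j+1)), cX (T (z (kk j))) n • e n)
          - ∑ n ∈ Finset.range (MM j), cX (T (z (kk j))) n • e n := by
      rw [hudef]
      simp only []
      rw [Finset.sum_Ico_eq_sub _ (hMmono (Nat.lt_succ_self j)).le]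
      abel
    rw [hsub]
    calc ‖_ - _‖ ≤ ‖-(T (z (kk j)) - ∑ n ∈ Finset.range (MM (j+1)), cX (T (z (kk j))) n • e n)‖
        + ‖∑ n ∈ Finset.range (MM j), cX (T (z (kk j))) n • e n‖ := norm_sub_le _ _
      _ ≤ η j + η j := by
          rw [norm_neg]
          exact add_le_add (hprop j).2.2.2.2.2.le (hprop j).2.2.2.1.le
      _ = 2 * η j := by ring
  -- numeric bounds
  have hden : ∀ j, (64:ℝ) ≤ 2^(j+6) * K * (1+‖T‖) := by
    intro j
    have h1 : (64:ℝ) ≤ 2^(j+6) := by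
      calc (64:ℝ) = 2^6 := by norm_num
        _ ≤ 2^(j+6) := pow_le_pow_right₀ one_le_two (by omega)
    have h2 : (2:ℝ)^(j+6) ≤ 2^(j+6)*K := le_mul_of_one_le_right (by positivity) hK1
    have h3 : (2:ℝ)^(j+6)*K ≤ 2^(j+6)*K*(1+‖T‖) :=
      le_mul_of_one_le_right (by positivity) (by linarith [norm_nonneg T])
    linarith
  have hη64 : ∀ j, η j ≤ ε/64 := by
    intro j
    rw [hηdef]
    exact div_le_div_of_nonneg_left hε.le (by norm_num) (hden j)
  have hδ : ∀ j, ‖u j - T (v j)‖ ≤ ε / (2^(j+5) * K) := by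
    intro j
    have h1 : u j - T (v j) = (u j - T (z (kk j))) + (T (z (kk j)) - T (v j)) := by abel
    have h2 : ‖T (z (kk j)) - T (v j)‖ ≤ ‖T‖ * (2 * η j) := by
      rw [← map_sub]
      calc ‖T (z (kk j) - v j)‖ ≤ ‖T‖ * ‖z (kk j) - v j‖ := T.le_opNorm _
        _ ≤ ‖T‖ * (2 * η j) := by
            have : ‖z (kk j) - v j‖ ≤ 2 * η j := by rw [norm_sub_rev]; exact hvz j
            exact mul_le_mul_of_nonneg_left this (norm_nonneg _)
    have h3 : ‖u j - T (v j)‖ ≤ 2 * η j + ‖T‖ * (2 * η j) := by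
      rw [h1]
      exact (norm_add_le _ _).trans (add_le_add (huz j) h2)
    have h4 : 2 * η j + ‖T‖ * (2 * η j) = ε / (2^(j+5) * K) := by
      rw [hηdef]
      have hKne : K ≠ 0 := by linarith
      have hTne : (1:ℝ) + ‖T‖ ≠ 0 := by positivity
      have hp : (2:ℝ)^(j+6) = 2^(j+5) * 2 := pow_succ 2 (j+5)
      field_simp
      ring
    linarith [h3, h4.le]
  have hδ32 : ∀ j, ε / (2^(j+5) * K) ≤ ε/32 := by
    intro j
    apply div_le_div_of_nonneg_left hε.le (by norm_num)
    have h1 : (32:ℝ) ≤ 2^(j+5) := by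
      calc (32:ℝ) = 2^5 := by norm_num
        _ ≤ 2^(j+5) := pow_le_pow_right₀ one_le_two (by omega)
    have h2 : (2:ℝ)^(j+5) ≤ 2^(j+5)*K := le_mul_of_one_le_right (by positivity) hK1
    linarith
  have hTz2 : ∀ j, ‖T (z (kk j))‖ ≤ 2 * ‖T‖ := by
    intro j
    calc ‖T (z (kk j))‖ ≤ ‖T‖ * ‖z (kk j)‖ := T.le_opNorm _
      _ ≤ ‖T‖ * 2 := mul_le_mul_of_nonneg_left (hznorm _) (norm_nonneg _)
      _ = 2 * ‖T‖ := by ring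
  have hu_lb : ∀ j, ε/2 ≤ ‖u j‖ := by
    intro j
    have h1 := abs_norm_sub_norm_le (u j) (T (z (kk j)))
    have h2 := abs_le.mp h1
    have h3 := hTz (kk j)
    have h4 := huz j
    have h5 := hη64 j
    linarith [h2.1, h2.2]
  have hu_ub : ∀ j, ‖u j‖ ≤ 2 * ‖T‖ + ε := by
    intro j
    have h1 := abs_le.mp (abs_norm_sub_norm_le (u j) (T (z (kk j))))
    have h4 := huz j
    have h5 := hη64 j
    have h6 := hTz2 j
    linarith [h1.1, h1.2]
  have hTv_lb : ∀ j, ε/4 ≤ ‖T (v j)‖ := by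
    intro j
    have h1 := abs_le.mp (abs_norm_sub_norm_le (u j) (T (v j)))
    have h2 := hδ j
    have h3 := hδ32 j
    have h4 := hu_lb j
    linarith [h1.1, h1.2]
  have hv_lb : ∀ j, ε/(4*‖T‖) ≤ ‖v j‖ := by
    intro j
    have h := le_trans (hTv_lb j) (T.le_opNorm (v j))
    rw [show ε/(4*‖T‖) = (ε/4)/‖T‖ by rw [div_div], div_le_iff₀ hTpos, mul_comm]
    linarith
  have hv_ub : ∀ j, ‖v j‖ ≤ 2 + ε := by
    intro j
    have h1 := abs_le.mp (abs_norm_sub_norm_le (v j) (z (kk j)))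
    have h2 := hvz j
    have h3 := hη64 j
    have h4 := hznorm (kk j)
    linarith [h1.1, h1.2]
  -- block structure
  have hexN : ∀ n : ℕ, ∃ j, n < NN (j+1) :=
    fun n => ⟨n, lt_of_lt_of_le (Nat.lt_succ_self n) hNmono.le_apply⟩
  have hexM : ∀ n : ℕ, ∃ j, n < MM (j+1) :=
    fun n => ⟨n, lt_of_lt_of_le (Nat.lt_succ_self n) hMmono.le_apply⟩
  set JY : ℕ → ℕ := fun n => Nat.find (hexN n) with hJYdef
  set JX : ℕ → ℕ := fun n => Nat.find (hexM n) with hJXdef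
  have hJY : ∀ j, ∀ n ∈ Finset.Ico (NN j) (NN (j+1)), JY n = j := by
    intro j n hn
    rw [Finset.mem_Ico] at hn
    have hle : JY n ≤ j := Nat.find_le hn.2
    rcases eq_or_lt_of_le hle with h | h
    · exact h
    · exfalso
      have h1 : n < NN (JY n + 1) := Nat.find_spec (hexN n)
      have h2 : NN (JY n + 1) ≤ NN j := hNmono.monotone (Nat.succ_le_of_lt h)
      exact lt_irrefl n ((h1.trans_le h2).trans_le hn.1)
  have hJX : ∀ j, ∀ n ∈ Finset.Ico (MM j) (MM (j+1)), JX n = j := by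
    intro j n hn
    rw [Finset.mem_Ico] at hn
    have hle : JX n ≤ j := Nat.find_le hn.2
    rcases eq_or_lt_of_le hle with h | h
    · exact h
    · exfalso
      have h1 : n < MM (JX n + 1) := Nat.find_spec (hexM n)
      have h2 : MM (JX n + 1) ≤ MM j := hMmono.monotone (Nat.succ_le_of_lt h)
      exact lt_irrefl n ((h1.trans_le h2).trans_le hn.1)
  have hblockU : IsBlockBasic e u := by
    refine ⟨fun j => Finset.Ico (MM j) (MM (j+1)), fun n => cX (T (z (kk (JX n)))) n,
      fun j => Finset.nonempty_Ico.mpr (hMmono (Nat.lt_succ_self j)), ?_, ?_⟩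
    · intro j m hm k' hk'
      rw [Finset.mem_Ico] at hm hk'
      exact lt_of_lt_of_le hm.2 hk'.1
    · intro j
      refine Finset.sum_congr rfl fun n hn => ?_
      simp only [hJX j n hn]
  have hblockV : IsBlockBasic y v := by
    refine ⟨fun j => Finset.Ico (NN j) (NN (j+1)), fun n => cY (z (kk (JY n))) n,
      fun j => Finset.nonempty_Ico.mpr (hNmono (Nat.lt_succ_self j)), ?_, ?_⟩
    · intro j m hm k' hk'
      rw [Finset.mem_Ico] at hm hk'
      exact lt_of_lt_of_le hm.2 hk'.1
    · intro j
      refine Finset.sum_congr rfl fun n hn => ?_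
      simp only [hJY j n hn]
  -- coefficients of the blocks in X
  have hcu : ∀ i, cX (u i) = fun n =>
      if n ∈ Finset.Ico (MM i) (MM (i+1)) then cX (T (z (kk i))) n else 0 := by
    intro i
    symm
    apply hXu
    apply tendsto_atTop_of_eventually_const (i₀ := MM (i+1))
    intro N hN
    have hsub : Finset.Ico (MM i) (MM (i+1)) ⊆ Finset.range N := by
      intro n hn
      rw [Finset.mem_Ico] at hn
      rw [Finset.mem_range]
      omega
    calc ∑ n ∈ Finset.range N,
          (if n ∈ Finset.Ico (MM i) (MM (i+1)) then cX (T (z (kk i))) n else 0) • e n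
        = ∑ n ∈ Finset.range N,
          (if n ∈ Finset.Ico (MM i) (MM (i+1)) then cX (T (z (kk i))) n • e n else 0) := by
          refine Finset.sum_congr rfl fun n _ => ?_
          split <;> simp
      _ = ∑ n ∈ Finset.range N ∩ Finset.Ico (MM i) (MM (i+1)), cX (T (z (kk i))) n • e n :=
          Finset.sum_ite_mem _ _ _
      _ = u i := by rw [Finset.inter_eq_right.mpr hsub]
  -- the key block estimate
  have hblock : ∀ (a : ℕ → ℝ) (s : Finset ℕ), ∀ j ∈ s,
      |a j| * ‖u j‖ ≤ 2 * K * ‖∑ i ∈ s, a i • u i‖ := by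
    intro a s j hj
    set S := ∑ i ∈ s, a i • u i with hSdef
    have hcS : cX S = fun n => ∑ i ∈ s, a i * cX (u i) n := coeff_finsum cX hXu hXt s a u
    have hkey : ∑ n ∈ Finset.Ico (MM j) (MM (j+1)), cX S n • e n = a j • u j := by
      have h1 : ∀ n ∈ Finset.Ico (MM j) (MM (j+1)), cX S n • e n
          = (a j * cX (T (z (kk j))) n) • e n := by
        intro n hn
        simp only [hcS]
        congr 1
        rw [Finset.sum_eq_single j]
        · simp only [hcu j]
          rw [if_pos hn]
        · intro i hi hij
          simp only [hcu i]
          have : n ∉ Finset.Ico (MM i) (MM (i+1)) := by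
            rw [Finset.mem_Ico] at hn ⊢
            rcases lt_or_gt_of_ne hij with h | h
            · have : MM (i+1) ≤ MM j := hMmono.monotone (show i+1 ≤ j by omega)
              omega
            · have : MM (j+1) ≤ MM i := hMmono.monotone (show j+1 ≤ i by omega)
              omega
          rw [if_neg this, mul_zero]
        · intro h
          exact absurd hj h
      rw [Finset.sum_congr rfl h1, hudef]
      simp only []
      rw [Finset.smul_sum]
      exact Finset.sum_congr rfl fun n _ => by rw [mul_smul]
    have hkey2 : a j • u j = (∑ n ∈ Finset.range (MM (j+1)), cX S n • e n)
        - ∑ n ∈ Finset.range (MM j), cX S n • e n := by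
      rw [← hkey, Finset.sum_Ico_eq_sub _ (hMmono (Nat.lt_succ_self j)).le]
    have : ‖a j • u j‖ ≤ K * ‖S‖ + K * ‖S‖ := by
      rw [hkey2]
      exact (norm_sub_le _ _).trans (add_le_add (hXb S _) (hXb S _))
    rw [norm_smul, Real.norm_eq_abs] at this
    linarith
  -- sum of the perturbations
  have hgeom : ∀ s : Finset ℕ, ∑ j ∈ s, ε / (2^(j+5) * K) ≤ ε / (16 * K) := by
    intro s
    have h1 : ∀ j, ε / (2^(j+5) * K) = (ε / (32 * K)) * (1/2)^j := by
      intro j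
      have hp : (2:ℝ)^(j+5) = 2^j * 32 := by rw [pow_add]; norm_num
      have h2 : (2:ℝ)^j ≠ 0 := by positivity
      have hKne : K ≠ 0 := by linarith
      rw [hp, div_pow, one_pow, mul_one_div, div_div]
      congr 1
      ring
    calc ∑ j ∈ s, ε / (2^(j+5) * K) = (ε / (32 * K)) * ∑ j ∈ s, (1/2:ℝ)^j := by
          rw [Finset.mul_sum]
          exact Finset.sum_congr rfl fun j _ => h1 j
      _ ≤ (ε / (32 * K)) * 2 := by
          refine mul_le_mul_of_nonneg_left ?_ (by positivity)
          calc ∑ j ∈ s, (1/2:ℝ)^j ≤ ∑ j ∈ Finset.range (s.sup id + 1), (1/2:ℝ)^j := by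
                refine Finset.sum_le_sum_of_subset_of_nonneg ?_ (fun j _ _ => by positivity)
                intro j hjs
                rw [Finset.mem_range]
                exact Nat.lt_succ_of_le (Finset.le_sup (f := id) hjs)
            _ ≤ 2 := sum_geometric_two_le _
      _ = ε / (16 * K) := by
          rw [div_mul_eq_mul_div, div_eq_div_iff (by positivity) (by positivity)]
          ring
  -- the equivalence
  have hequiv : SeqEquiv u (fun j => T (v j)) := by
    refine ⟨2, one_le_two, fun a s => ?_⟩
    set S := ∑ j ∈ s, a j • u j with hSdef
    set W := ∑ j ∈ s, a j • T (v j) with hWdef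
    have hWS : ‖W - S‖ ≤ ‖S‖ / 4 := by
      have h1 : W - S = ∑ j ∈ s, a j • (T (v j) - u j) := by
        rw [hWdef, hSdef, ← Finset.sum_sub_distrib]
        exact Finset.sum_congr rfl fun j _ => (smul_sub _ _ _).symm
      have h2 : ∀ j ∈ s, ‖a j • (T (v j) - u j)‖ ≤ (4 * K * ‖S‖ / ε) * (ε / (2^(j+5) * K)) := by
        intro j hj
        rw [norm_smul, Real.norm_eq_abs]
        have haj : |a j| ≤ 4 * K * ‖S‖ / ε := by
          have hb := hblock a s j hj
          have hul := hu_lb j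
          have : |a j| * (ε/2) ≤ 2 * K * ‖S‖ := by
            calc |a j| * (ε/2) ≤ |a j| * ‖u j‖ :=
                  mul_le_mul_of_nonneg_left hul (abs_nonneg _)
              _ ≤ 2 * K * ‖S‖ := hb
          rw [le_div_iff₀ hε]
          linarith
        have htv : ‖T (v j) - u j‖ ≤ ε / (2^(j+5) * K) := by
          rw [norm_sub_rev]; exact hδ j
        exact mul_le_mul haj htv (norm_nonneg _) (by positivity)
      calc ‖W - S‖ ≤ ∑ j ∈ s, ‖a j • (T (v j) - u j)‖ := by
            rw [h1]; exact norm_sum_le _ _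
        _ ≤ ∑ j ∈ s, (4 * K * ‖S‖ / ε) * (ε / (2^(j+5) * K)) := Finset.sum_le_sum h2
        _ = (4 * K * ‖S‖ / ε) * ∑ j ∈ s, ε / (2^(j+5) * K) := by rw [Finset.mul_sum]
        _ ≤ (4 * K * ‖S‖ / ε) * (ε / (16 * K)) := by
            refine mul_le_mul_of_nonneg_left (hgeom s) (by positivity)
        _ = ‖S‖ / 4 := by
            rw [div_mul_div_comm, div_eq_div_iff (by positivity) (by norm_num)]
            ring
    have h3 := abs_le.mp (abs_norm_sub_norm_le W S)
    constructor
    · rw [inv_eq_one_div]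
      have : ‖W‖ ≤ ‖S‖ + ‖S‖/4 := by linarith [h3.2]
      linarith [norm_nonneg S]
    · have : ‖S‖ - ‖W‖ ≤ ‖S‖/4 := by linarith [h3.1]
      have h4 : ‖S‖ ≤ (4/3) * ‖W‖ := by linarith
      linarith [norm_nonneg W]
  exact ⟨u, v, hblockU, ⟨ε/2, 2*‖T‖ + ε, by positivity, fun j => ⟨hu_lb j, hu_ub j⟩⟩,
    hblockV, ⟨ε/(4*‖T‖), 2 + ε, by positivity, fun j => ⟨hv_lb j, hv_ub j⟩⟩, hequiv⟩
end

section
/- Let 1 ≤ q < ∞ and let X be a real Banach space with a Schauder basis (e_n)_{n∈ℕ}. If X contains an isomorphic copy of ℓ_q, then there exists a block basic sequence with respect to (e_n) that is equivalent to the canonical basis of ℓ_q. -/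
open scoped BigOperators

open Filter Finset
open scoped BigOperators Topology ENNReal

section PartA

variable {X : Type*} [NormedAddCommGroup X] [NormedSpace ℝ X] [CompleteSpace X]

local instance fact_one_le_top : Fact ((1:ℝ≥0∞) ≤ ⊤) := ⟨le_top⟩

lemma dist_apply_le_dist (g h : lp (fun _ : ℕ => X) ⊤) (N : ℕ) :
    dist (g N) (h N) ≤ dist g h := by
  rw [dist_eq_norm, dist_eq_norm]
  have : g N - h N = (g - h) N := by simp [lp.coeFn_sub]
  rw [this]
  exact lp.norm_apply_le_norm ENNReal.top_ne_zero (g - h) N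

lemma continuous_eval (N : ℕ) :
    Continuous fun g : lp (fun _ : ℕ => X) ⊤ => g N := by
  refine (LipschitzWith.of_dist_le_mul (K := 1) fun g h => ?_).continuous
  simpa using dist_apply_le_dist g h N

lemma isClosed_cauchySeq :
    IsClosed {g : lp (fun _ : ℕ => X) ⊤ | CauchySeq (g : ∀ _ : ℕ, X)} := by
  refine isClosed_of_closure_subset fun g hg => ?_
  show CauchySeq (g : ∀ _ : ℕ, X)
  rw [Metric.cauchySeq_iff]
  intro ε hε
  obtain ⟨h, hhS, hdist⟩ := Metric.mem_closure_iff.mp hg (ε/3) (by positivity)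
  obtain ⟨B, hB⟩ := Metric.cauchySeq_iff.mp hhS (ε/3) (by positivity)
  refine ⟨B, fun m hm n hn => ?_⟩
  calc dist (g m) (g n) ≤ dist (g m) (h m) + dist (h m) (h n) + dist (h n) (g n) :=
        dist_triangle4 _ _ _ _
    _ < ε/3 + ε/3 + ε/3 := by
        gcongr
        · exact (dist_apply_le_dist g h m).trans_lt hdist
        · exact hB m hm n hn
        · exact (dist_apply_le_dist h g n).trans_lt (dist_comm g h ▸ hdist)
    _ = ε := by ring

variable (e : ℕ → X)

/-- The space of sequences of partial sums with respect to `e`. -/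
noncomputable def blockSeqSpace : Submodule ℝ (lp (fun _ : ℕ => X) ⊤) where
  carrier := {g | CauchySeq (g : ∀ _ : ℕ, X) ∧ g 0 = 0 ∧
    ∀ N, g (N+1) - g N ∈ Submodule.span ℝ {e N}}
  add_mem' := by
    rintro g h ⟨hg1, hg2, hg3⟩ ⟨hh1, hh2, hh3⟩
    have hco : ∀ N, (↑(g + h) : ∀ _ : ℕ, X) N = g N + h N := by
      intro N; simp [lp.coeFn_add]
    refine ⟨?_, ?_, ?_⟩
    · have h2 : CauchySeq (fun N => g N + h N) := hg1.add hh1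
      have : (fun N => g N + h N) = (↑(g + h) : ∀ _ : ℕ, X) := funext fun N => (hco N).symm
      rwa [this] at h2
    · rw [hco, hg2, hh2, add_zero]
    · intro N
      rw [hco, hco]
      have : g (N+1) + h (N+1) - (g N + h N) = (g (N+1) - g N) + (h (N+1) - h N) := by abel
      rw [this]
      exact Submodule.add_mem _ (hg3 N) (hh3 N)
  zero_mem' := by
    refine ⟨?_, by simp [lp.coeFn_zero], fun N => by simp [lp.coeFn_zero]⟩
    have : (↑(0 : lp (fun _ : ℕ => X) ⊤) : ∀ _ : ℕ, X) = fun _ => 0 := by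
      simp [lp.coeFn_zero]; rfl
    rw [this]; exact cauchySeq_const 0
  smul_mem' := by
    rintro c g ⟨hg1, hg2, hg3⟩
    have hco : ∀ N, (↑(c • g) : ∀ _ : ℕ, X) N = c • g N := by
      intro N; simp [lp.coeFn_smul]
    refine ⟨?_, ?_, ?_⟩
    · have h2 : CauchySeq (fun N => c • g N) :=
        (uniformContinuous_const_smul c).comp_cauchySeq hg1
      have : (fun N => c • g N) = (↑(c • g) : ∀ _ : ℕ, X) := funext fun N => (hco N).symm
      rwa [this] at h2
    · rw [hco, hg2, smul_zero]
    · intro N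
      rw [hco, hco, ← smul_sub]
      exact Submodule.smul_mem _ c (hg3 N)

lemma isClosed_blockSeqSpace : IsClosed ((blockSeqSpace e : Submodule ℝ _) : Set (lp (fun _ : ℕ => X) ⊤)) := by
  have : ((blockSeqSpace e : Submodule ℝ _) : Set (lp (fun _ : ℕ => X) ⊤)) =
      {g : lp (fun _ : ℕ => X) ⊤ | CauchySeq (g : ∀ _ : ℕ, X)} ∩
      ((fun g : lp (fun _ : ℕ => X) ⊤ => g 0) ⁻¹' {0}) ∩
      ⋂ N, (fun g : lp (fun _ : ℕ => X) ⊤ => g (N+1) - g N) ⁻¹'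
        (Submodule.span ℝ {e N} : Set X) := by
    ext g
    simp only [Set.mem_inter_iff, Set.mem_iInter, Set.mem_preimage, Set.mem_singleton_iff,
      Set.mem_setOf_eq, SetLike.mem_coe]
    constructor
    · rintro ⟨h1, h2, h3⟩; exact ⟨⟨h1, h2⟩, h3⟩
    · rintro ⟨⟨h1, h2⟩, h3⟩; exact ⟨h1, h2, h3⟩
  rw [this]
  refine (isClosed_cauchySeq.inter ?_).inter ?_
  · exact (isClosed_singleton).preimage (continuous_eval 0)
  · exact isClosed_iInter fun N =>
      (Submodule.span ℝ {e N}).closed_of_finiteDimensional.preimage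
        ((continuous_eval (N+1)).sub (continuous_eval N))


instance : CompleteSpace (blockSeqSpace e) :=
  IsClosed.completeSpace_coe (hs := isClosed_blockSeqSpace e)

variable {e}

lemma tendsto_limFun (g : blockSeqSpace e) :
    Tendsto ((g : lp (fun _ : ℕ => X) ⊤) : ∀ _ : ℕ, X) atTop
      (nhds (limUnder atTop ((g : lp (fun _ : ℕ => X) ⊤) : ∀ _ : ℕ, X))) :=
  g.2.1.tendsto_limUnder

variable (e)

/-- The limit operator from the sequence space to `X`. -/
noncomputable def limCLM : blockSeqSpace e →L[ℝ] X :=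
  LinearMap.mkContinuous
    { toFun := fun g => limUnder atTop ((g : lp (fun _ : ℕ => X) ⊤) : ∀ _ : ℕ, X)
      map_add' := fun g h => by
        have h2 := (tendsto_limFun g).add (tendsto_limFun h)
        have h3 : (fun N => ((g : lp (fun _ : ℕ => X) ⊤) : ∀ _ : ℕ, X) N +
            ((h : lp (fun _ : ℕ => X) ⊤) : ∀ _ : ℕ, X) N)
            = (((g + h : blockSeqSpace e) : lp (fun _ : ℕ => X) ⊤) : ∀ _ : ℕ, X) := by
          funext N; simp [lp.coeFn_add]
        rw [h3] at h2
        exact h2.limUnder_eq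
      map_smul' := fun c g => by
        have h2 := (tendsto_limFun g).const_smul c
        have h3 : (fun N => c • ((g : lp (fun _ : ℕ => X) ⊤) : ∀ _ : ℕ, X) N)
            = (((c • g : blockSeqSpace e) : lp (fun _ : ℕ => X) ⊤) : ∀ _ : ℕ, X) := by
          funext N; simp [lp.coeFn_smul]
        rw [h3] at h2
        exact h2.limUnder_eq }
    1
    (fun g => by
      refine le_of_tendsto (tendsto_limFun g).norm (Eventually.of_forall fun N => ?_)
      rw [one_mul]
      exact lp.norm_apply_le_norm ENNReal.top_ne_zero _ N)

variable {e}

lemma limCLM_apply (g : blockSeqSpace e) :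
    limCLM e g = limUnder atTop ((g : lp (fun _ : ℕ => X) ⊤) : ∀ _ : ℕ, X) := rfl

lemma blockSeq_repr (g : blockSeqSpace e) :
    ∃ a : ℕ → ℝ, ∀ N, ((g : lp (fun _ : ℕ => X) ⊤) : ∀ _ : ℕ, X) N
      = ∑ n ∈ range N, a n • e n := by
  have h3 := g.2.2.2
  choose a ha using fun N => Submodule.mem_span_singleton.mp (h3 N)
  refine ⟨a, fun N => ?_⟩
  induction N with
  | zero => simpa using g.2.2.1
  | succ N ih =>
    rw [Finset.sum_range_succ, ← ih, ha N]
    abel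

lemma limCLM_ker (he : IsSchauderBasis e) : (limCLM e).ker = ⊥ := by
  rw [LinearMap.ker_eq_bot']
  intro g (hg : limCLM e g = 0)
  obtain ⟨a, ha⟩ := blockSeq_repr g
  have htend : Tendsto (fun N => ∑ n ∈ range N, a n • e n) atTop (nhds 0) := by
    have := tendsto_limFun g
    rw [← limCLM_apply, hg] at this
    exact this.congr fun N => ha N
  have hzero : Tendsto (fun N => ∑ n ∈ range N, (0:ℝ) • e n) atTop (nhds (0:X)) := by
    simpa using tendsto_const_nhds (α := X) (x := 0)
  have h0 : a = fun _ => (0:ℝ) := (he 0).unique htend hzero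
  apply Subtype.ext
  apply lp.ext
  funext N
  have := ha N
  rw [h0] at this
  simpa using this

lemma limCLM_range (he : IsSchauderBasis e) : (limCLM e).range = ⊤ := by
  rw [LinearMap.range_eq_top]
  intro x
  obtain ⟨a, ha⟩ := (he x).exists
  set s : ∀ _ : ℕ, X := fun N => ∑ n ∈ range N, a n • e n with hs
  have hmem : Memℓp s ⊤ := memℓp_infty (ha.norm.isBoundedUnder_le.bddAbove_range)
  set G : lp (fun _ : ℕ => X) ⊤ := ⟨s, hmem⟩ with hG
  have hGcoe : (G : ∀ _ : ℕ, X) = s := rfl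
  have hGmem : G ∈ blockSeqSpace e := by
    refine ⟨?_, ?_, ?_⟩
    · rw [hGcoe]; exact ha.cauchySeq
    · rw [hGcoe]; simp [hs]
    · intro N
      rw [hGcoe]
      refine Submodule.mem_span_singleton.mpr ⟨a N, ?_⟩
      simp only [hs]
      rw [Finset.sum_range_succ]
      abel
  refine ⟨⟨G, hGmem⟩, ?_⟩
  rw [ContinuousLinearMap.coe_coe, limCLM_apply]
  exact Tendsto.limUnder_eq (by rw [hGcoe]; exact ha)

lemma schauder_exists_coef (he : IsSchauderBasis e) :
    ∃ A : X → ℕ → ℝ,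
      (∀ x, Tendsto (fun N => ∑ n ∈ Finset.range N, A x n • e n) atTop (nhds x)) ∧
      (∀ x y, A (x - y) = A x - A y) ∧
      ∃ M : ℕ → ℝ, ∀ x n, |A x n| ≤ M n * ‖x‖ := by
  classical
  -- the basis vectors are nonzero
  have e_ne : ∀ n, e n ≠ 0 := by
    intro n h0
    have h1 : Tendsto (fun N => ∑ m ∈ range N, (Pi.single (M := fun _ : ℕ => ℝ) n 1) m • e m)
        atTop (nhds (0:X)) := by
      have : ∀ N, ∑ m ∈ range N, (Pi.single (M := fun _ : ℕ => ℝ) n 1) m • e m = 0 := by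
        intro N
        refine Finset.sum_eq_zero fun m _ => ?_
        by_cases hm : m = n
        · subst hm; rw [h0, smul_zero]
        · rw [Pi.single_eq_of_ne hm, zero_smul]
      simpa [this] using tendsto_const_nhds (α := X) (x := 0)
    have h2 : Tendsto (fun N => ∑ m ∈ range N, (0:ℝ) • e m) atTop (nhds (0:X)) := by
      simpa using tendsto_const_nhds (α := X) (x := 0)
    have h3 : Pi.single (M := fun _ : ℕ => ℝ) n 1 = fun _ => (0:ℝ) := (he 0).unique h1 h2
    have := congrFun h3 n
    simp at this
  set A : X → ℕ → ℝ := fun x => (he x).exists.choose with hA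
  have hAx : ∀ x, Tendsto (fun N => ∑ n ∈ Finset.range N, A x n • e n) atTop (nhds x) :=
    fun x => (he x).exists.choose_spec
  have hsub : ∀ x y, A (x - y) = A x - A y := by
    intro x y
    refine (he (x - y)).unique (hAx (x - y)) ?_
    have h2 := (hAx x).sub (hAx y)
    have h3 : ∀ N, ∑ n ∈ range N, A x n • e n - ∑ n ∈ range N, A y n • e n
        = ∑ n ∈ range N, (A x - A y) n • e n := by
      intro N
      rw [← Finset.sum_sub_distrib]
      exact Finset.sum_congr rfl fun n _ => by simp [sub_smul]
    exact h2.congr fun N => h3 N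
  refine ⟨A, hAx, hsub, ?_⟩
  set E := ContinuousLinearEquiv.ofBijective (limCLM e) (limCLM_ker he) (limCLM_range he)
    with hE
  set K := ‖(E.symm : X →L[ℝ] blockSeqSpace e)‖ with hK
  refine ⟨fun n => 2 * K / ‖e n‖, fun x n => ?_⟩
  set g : blockSeqSpace e := E.symm x with hg
  have hTg : limCLM e g = x := by
    have := E.apply_symm_apply x
    rwa [hE, ContinuousLinearEquiv.coeFn_ofBijective] at this
  obtain ⟨a, ha⟩ := blockSeq_repr g
  have htend : Tendsto (fun N => ∑ n ∈ range N, a n • e n) atTop (nhds x) := by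
    have h1 := tendsto_limFun g
    rw [← limCLM_apply, hTg] at h1
    exact h1.congr fun N => ha N
  have hax : A x = a := (he x).unique (hAx x) htend
  have hdiff : a n • e n = ((g : lp (fun _ : ℕ => X) ⊤) : ∀ _ : ℕ, X) (n+1)
      - ((g : lp (fun _ : ℕ => X) ⊤) : ∀ _ : ℕ, X) n := by
    rw [ha, ha, Finset.sum_range_succ]
    abel
  have hnorm : |a n| * ‖e n‖ ≤ 2 * K * ‖x‖ := by
    have h1 : ‖a n • e n‖ ≤ 2 * ‖g‖ := by
      rw [hdiff]
      refine (norm_sub_le _ _).trans ?_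
      have h2 := lp.norm_apply_le_norm ENNReal.top_ne_zero
        ((g : lp (fun _ : ℕ => X) ⊤)) (n+1)
      have h3 := lp.norm_apply_le_norm ENNReal.top_ne_zero
        ((g : lp (fun _ : ℕ => X) ⊤)) n
      have : ‖g‖ = ‖(g : lp (fun _ : ℕ => X) ⊤)‖ := rfl
      rw [this]; linarith
    have h4 : ‖g‖ ≤ K * ‖x‖ := by
      rw [hg]
      exact (E.symm : X →L[ℝ] blockSeqSpace e).le_opNorm x
    rw [norm_smul, Real.norm_eq_abs] at h1
    nlinarith [norm_nonneg x, abs_nonneg (a n), norm_nonneg (e n)]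
  rw [hax]
  have hpos : 0 < ‖e n‖ := norm_pos_iff.mpr (e_ne n)
  rw [div_mul_eq_mul_div, le_div_iff₀ hpos]
  exact hnorm

end PartA

section PartB

variable {q : ℝ}

/-- single vectors in `ℓ_q`. -/
noncomputable def lqSingle (q : ℝ) (i : ℕ) (r : ℝ) :
    lp (fun _ : ℕ => ℝ) (ENNReal.ofReal q) :=
  lp.single (ENNReal.ofReal q) i r

lemma toReal_ofReal_q (hq : 1 ≤ q) : (ENNReal.ofReal q).toReal = q :=
  ENNReal.toReal_ofReal (by linarith)

lemma norm_sum_single_comp (hq : 1 ≤ q) (ρ : ℕ → ℕ) (hρ : Function.Injective ρ)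
    (b : ℕ → ℝ) (s' : Finset ℕ) :
    ‖∑ m ∈ s', lqSingle q (ρ m) (b m)‖ ^ q = ∑ m ∈ s', |b m| ^ q := by
  classical
  have hq0 : 0 < (ENNReal.ofReal q).toReal := by rw [toReal_ofReal_q hq]; linarith
  set b' : ℕ → ℝ := Function.extend ρ b 0 with hb'
  have hb'ρ : ∀ m, b' (ρ m) = b m := fun m => hρ.extend_apply b 0 m
  have h1 : ∑ m ∈ s', lqSingle q (ρ m) (b m)
      = ∑ i ∈ s'.image ρ, lqSingle q i (b' i) := by
    rw [Finset.sum_image (fun x _ y _ h => hρ h)]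
    exact Finset.sum_congr rfl fun m _ => by rw [hb'ρ]
  rw [h1]
  have h2 := lp.norm_sum_single (E := fun _ : ℕ => ℝ) hq0 (fun i => b' i) (s'.image ρ)
  rw [toReal_ofReal_q hq] at h2
  simp only [lqSingle]
  rw [h2, Finset.sum_image (fun x _ y _ h => hρ h)]
  exact Finset.sum_congr rfl fun m _ => by rw [hb'ρ, Real.norm_eq_abs]

lemma norm_sum_pair (hq : 1 ≤ q) (σ τ : ℕ → ℕ)
    (hστ : ∀ j, σ j < τ j) (hτσ : ∀ j, τ j < σ (j+1)) (a : ℕ → ℝ) (s : Finset ℕ) :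
    ‖∑ j ∈ s, a j • (lqSingle q (τ j) 1
        - lqSingle q (σ j) 1)‖ ^ q
      = 2 * ∑ j ∈ s, |a j| ^ q := by
  classical
  set ρ : ℕ → ℕ := fun m => if m % 2 = 0 then σ (m / 2) else τ (m / 2) with hρdef
  have hρmono : StrictMono ρ := by
    apply strictMono_nat_of_lt_succ
    intro m
    rcases Nat.even_or_odd m with ⟨t, rfl⟩ | ⟨t, rfl⟩
    · have e1 : (t + t) % 2 = 0 := by omega
      have e2 : (t + t + 1) % 2 = 1 := by omega
      have e3 : (t + t) / 2 = t := by omega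
      have e4 : (t + t + 1) / 2 = t := by omega
      simp only [hρdef, e1, e2, e3, e4, if_true, if_pos rfl]
      norm_num
      exact hστ t
    · have e1 : (2 * t + 1) % 2 = 1 := by omega
      have e2 : (2 * t + 1 + 1) % 2 = 0 := by omega
      have e3 : (2 * t + 1) / 2 = t := by omega
      have e4 : (2 * t + 1 + 1) / 2 = t + 1 := by omega
      simp only [hρdef, e1, e2, e3, e4]
      norm_num
      exact hτσ t
  set b : ℕ → ℝ := fun m => if m % 2 = 0 then -a (m / 2) else a (m / 2) with hbdef
  set s' : Finset ℕ := s.image (fun j => 2*j) ∪ s.image (fun j => 2*j+1) with hs'def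
  have hdisj : Disjoint (s.image (fun j => 2*j)) (s.image (fun j => 2*j+1)) := by
    rw [Finset.disjoint_left]
    intro m hm hm'
    obtain ⟨j, _, rfl⟩ := Finset.mem_image.mp hm
    obtain ⟨j', _, hj'⟩ := Finset.mem_image.mp hm'
    omega
  have hinj2 : ∀ x ∈ s, ∀ y ∈ s, 2*x = 2*y → x = y := fun x _ y _ h => by omega
  have hinj2' : ∀ x ∈ s, ∀ y ∈ s, 2*x+1 = 2*y+1 → x = y := fun x _ y _ h => by omega
  have hvec : ∑ j ∈ s, a j • (lqSingle q (τ j) 1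
        - lqSingle q (σ j) 1)
      = ∑ m ∈ s', lqSingle q (ρ m) (b m) := by
    rw [hs'def, Finset.sum_union hdisj, Finset.sum_image hinj2, Finset.sum_image hinj2']
    have he1 : ∀ j, ρ (2*j) = σ j ∧ b (2*j) = -a j := by
      intro j
      have e1 : (2*j) % 2 = 0 := by omega
      have e2 : (2*j) / 2 = j := by omega
      constructor <;> simp [hρdef, hbdef, e1, e2]
    have he2 : ∀ j, ρ (2*j+1) = τ j ∧ b (2*j+1) = a j := by
      intro j
      have e1 : (2*j+1) % 2 = 1 := by omega
      have e2 : (2*j+1) / 2 = j := by omega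
      constructor <;> simp [hρdef, hbdef, e1, e2]
    rw [← Finset.sum_add_distrib]
    refine Finset.sum_congr rfl fun j _ => ?_
    rw [(he1 j).1, (he1 j).2, (he2 j).1, (he2 j).2]
    have hsm : ∀ (i : ℕ) (r : ℝ), lqSingle q i r = r • lqSingle q i 1 := by
      intro i r
      simp only [lqSingle]
      rw [← lp.single_smul (E := fun _ : ℕ => ℝ)]
      norm_num
    rw [hsm (σ j) (-a j), hsm (τ j) (a j), smul_sub]
    module
  rw [hvec, norm_sum_single_comp hq ρ hρmono.injective b s']
  rw [hs'def, Finset.sum_union hdisj, Finset.sum_image hinj2, Finset.sum_image hinj2']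
  have he1 : ∀ j, |b (2*j)| = |a j| := by
    intro j
    have e1 : (2*j) % 2 = 0 := by omega
    have e2 : (2*j) / 2 = j := by omega
    simp [hbdef, e1, e2]
  have he2 : ∀ j, |b (2*j+1)| = |a j| := by
    intro j
    have e1 : (2*j+1) % 2 = 1 := by omega
    have e2 : (2*j+1) / 2 = j := by omega
    simp [hbdef, e1, e2]
  simp only [he1, he2]
  ring

lemma norm_sum_pair' (hq : 1 ≤ q) (σ τ : ℕ → ℕ)
    (hστ : ∀ j, σ j < τ j) (hτσ : ∀ j, τ j < σ (j+1)) (a : ℕ → ℝ) (s : Finset ℕ) :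
    ‖∑ j ∈ s, a j • (lqSingle q (τ j) 1
        - lqSingle q (σ j) 1)‖
      = (2 * ∑ j ∈ s, |a j| ^ q) ^ (1/q) := by
  haveI : Fact (1 ≤ ENNReal.ofReal q) := ⟨ENNReal.one_le_ofReal.mpr hq⟩
  have h := norm_sum_pair hq σ τ hστ hτσ a s
  have hqne : q ≠ 0 := by intro h0; rw [h0] at hq; linarith
  have hn : (0:ℝ) ≤ ‖∑ j ∈ s, a j • (lqSingle q (τ j) 1 - lqSingle q (σ j) 1)‖ :=
    norm_nonneg _
  calc ‖∑ j ∈ s, a j • (lqSingle q (τ j) 1 - lqSingle q (σ j) 1)‖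
      = (‖∑ j ∈ s, a j • (lqSingle q (τ j) 1 - lqSingle q (σ j) 1)‖ ^ q) ^ (1/q) := by
        rw [← Real.rpow_mul hn, mul_one_div_cancel hqne, Real.rpow_one]
    _ = (2 * ∑ j ∈ s, |a j| ^ q) ^ (1/q) := by rw [h]

end PartB


theorem statement2 {X : Type*} [NormedAddCommGroup X] [NormedSpace ℝ X] [CompleteSpace X]
    (q : ℝ) (hq : 1 ≤ q) (e : ℕ → X) (he : IsSchauderBasis e)
    (hcopy : ContainsLp X q) :
    ∃ u : ℕ → X, IsBlockBasic e u ∧ EquivCanonLq u q := by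
  classical
  obtain ⟨J, C, c, hc, hJ⟩ := hcopy
  obtain ⟨A, hAtend, hAsub, M0, hM0⟩ := schauder_exists_coef he
  have hq0 : (0:ℝ) < q := by linarith
  have hqne : q ≠ 0 := ne_of_gt hq0
  have hq0' : 0 < (ENNReal.ofReal q).toReal := by rw [toReal_ofReal_q hq]; exact hq0
  set M : ℕ → ℝ := fun n => max (M0 n) 0 with hMdef
  have hM : ∀ x n, |A x n| ≤ M n * ‖x‖ := fun x n =>
    (hM0 x n).trans (mul_le_mul_of_nonneg_right (le_max_left _ _) (norm_nonneg x))
  have hMnn : ∀ n, 0 ≤ M n := fun n => le_max_right _ _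
  -- the images of the unit vectors
  set x : ℕ → X := fun k => J (lqSingle q k 1) with hxdef
  have hsing : ∀ k, ‖lqSingle q k 1‖ = 1 := by
    intro k
    have := lp.norm_single (E := fun _ : ℕ => ℝ) (ENNReal.ofReal_pos.mpr hq0) k (1:ℝ)
    simpa [lqSingle] using this
  have hxnorm : ∀ k, ‖x k‖ ≤ C := by
    intro k
    have := (hJ (lqSingle q k 1)).1
    rwa [hsing k, mul_one] at this
  -- diagonal argument
  set v : ℕ → ℕ → ℝ := fun k n => A (x k) n with hvdef
  have hvmem : ∀ k, v k ∈ Set.pi Set.univ (fun n => Set.Icc (-(M n * C)) (M n * C)) := by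
    intro k
    intro n _
    have h1 : |v k n| ≤ M n * C := by
      refine (hM (x k) n).trans ?_
      exact mul_le_mul_of_nonneg_left (hxnorm k) (hMnn n)
    exact abs_le.mp h1
  have hcpt : IsCompact (Set.pi Set.univ (fun n : ℕ => Set.Icc (-(M n * C)) (M n * C))) :=
    isCompact_univ_pi fun n => isCompact_Icc
  obtain ⟨L, -, φ, hφ, hconv⟩ := hcpt.tendsto_subseq hvmem
  have hcoord : ∀ n, Tendsto (fun k => v (φ k) n) atTop (nhds (L n)) := by
    intro n
    exact (tendsto_pi_nhds.mp hconv) n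
  -- the difference sequence
  set y : ℕ → X := fun j => x (φ (2*j+1)) - x (φ (2*j)) with hydef
  have hycoef : ∀ n, Tendsto (fun j => A (y j) n) atTop (nhds 0) := by
    intro n
    have hodd : Tendsto (fun j : ℕ => 2*j+1) atTop atTop :=
      tendsto_atTop_mono (f := id) (fun j => by simp only [id]; omega) tendsto_id
    have heven : Tendsto (fun j : ℕ => 2*j) atTop atTop :=
      tendsto_atTop_mono (f := id) (fun j => by simp only [id]; omega) tendsto_id
    have h1 : Tendsto (fun j => v (φ (2*j+1)) n) atTop (nhds (L n)) :=
      (hcoord n).comp hodd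
    have h2 : Tendsto (fun j => v (φ (2*j)) n) atTop (nhds (L n)) :=
      (hcoord n).comp heven
    have h3 := h1.sub h2
    rw [sub_self] at h3
    refine h3.congr fun j => ?_
    have := hAsub (x (φ (2*j+1))) (x (φ (2*j)))
    rw [hydef]
    simp only
    rw [this]
    simp [hvdef]
  -- partial sum operator
  set P : ℕ → X → X := fun N z => ∑ n ∈ range N, A z n • e n with hPdef
  have hPtend : ∀ z, Tendsto (fun N => P N z) atTop (nhds z) := hAtend
  have hPy0 : ∀ N, Tendsto (fun j => P N (y j)) atTop (nhds 0) := by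
    intro N
    have h1 : Tendsto (fun j => ∑ n ∈ range N, A (y j) n • e n) atTop
        (nhds (∑ n ∈ range N, (0:X))) := by
      refine tendsto_finset_sum _ fun n _ => ?_
      simpa using (hycoef n).smul_const (e n)
    simpa using h1
  -- epsilons
  set ε : ℕ → ℝ := fun j => (c/8) * (1/2)^j with hεdef
  have hεpos : ∀ j, 0 < ε j := by intro j; rw [hεdef]; positivity
  -- the recursion step
  have key : ∀ (Nj kprev : ℕ) (ε' : ℝ), 0 < ε' → ∃ kN : ℕ × ℕ,
      kprev < kN.1 ∧ Nj < kN.2 ∧ ‖P Nj (y kN.1)‖ < ε' ∧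
      ‖y kN.1 - P kN.2 (y kN.1)‖ < ε' := by
    intro Nj kprev ε' hε'
    have h1 : Tendsto (fun j => ‖P Nj (y j)‖) atTop (nhds 0) := by
      have := (hPy0 Nj).norm
      rwa [norm_zero] at this
    have h2 : ∀ᶠ j in atTop, ‖P Nj (y j)‖ < ε' :=
      h1.eventually_lt_const hε'
    have h3 : ∀ᶠ j in atTop, kprev < j := eventually_gt_atTop kprev
    obtain ⟨k1, hk1, hk2⟩ := (h2.and h3).exists
    have h4 : Tendsto (fun N => ‖y k1 - P N (y k1)‖) atTop (nhds 0) := by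
      have := (tendsto_const_nhds (x := y k1) (f := atTop)).sub (hPtend (y k1))
      rw [sub_self] at this
      have := this.norm
      rwa [norm_zero] at this
    have h5 : ∀ᶠ N in atTop, ‖y k1 - P N (y k1)‖ < ε' := h4.eventually_lt_const hε'
    have h6 : ∀ᶠ N in atTop, Nj < N := eventually_gt_atTop Nj
    obtain ⟨N1, hN1, hN2⟩ := (h5.and h6).exists
    exact ⟨(k1, N1), hk2, hN2, hk1, hN1⟩
  -- the recursion
  set G : ℕ → ℕ × ℕ := fun j => Nat.rec (Classical.choose (key 0 0 (ε 0) (hεpos 0)))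
    (fun i ih => Classical.choose (key ih.2 ih.1 (ε (i+1)) (hεpos (i+1)))) j with hGdef
  have hG0 : 0 < (G 0).1 ∧ 0 < (G 0).2 ∧ ‖P 0 (y (G 0).1)‖ < ε 0 ∧
      ‖y (G 0).1 - P (G 0).2 (y (G 0).1)‖ < ε 0 := by
    have := Classical.choose_spec (key 0 0 (ε 0) (hεpos 0))
    rw [hGdef]
    exact this
  have hGs : ∀ i, (G i).1 < (G (i+1)).1 ∧ (G i).2 < (G (i+1)).2 ∧
      ‖P (G i).2 (y (G (i+1)).1)‖ < ε (i+1) ∧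
      ‖y (G (i+1)).1 - P (G (i+1)).2 (y (G (i+1)).1)‖ < ε (i+1) := by
    intro i
    have := Classical.choose_spec (key (G i).2 (G i).1 (ε (i+1)) (hεpos (i+1)))
    rw [hGdef]
    exact this
  set k : ℕ → ℕ := fun j => (G j).1 with hkdef
  set N : ℕ → ℕ := fun j => Nat.rec 0 (fun i _ => (G i).2) j with hNdef
  have hN0 : N 0 = 0 := rfl
  have hNsucc : ∀ j, N (j+1) = (G j).2 := fun j => rfl
  have hNlt : ∀ j, N j < N (j+1) := by
    intro j
    cases j with
    | zero => exact hG0.2.1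
    | succ i => exact (hGs i).2.1
  have hNmono : StrictMono N := strictMono_nat_of_lt_succ hNlt
  have hkmono : StrictMono k := strictMono_nat_of_lt_succ fun j => (hGs j).1
  have hPsmall : ∀ j, ‖P (N j) (y (k j))‖ < ε j := by
    intro j
    cases j with
    | zero => exact hG0.2.2.1
    | succ i => exact (hGs i).2.2.1
  have hTail : ∀ j, ‖y (k j) - P (N (j+1)) (y (k j))‖ < ε j := by
    intro j
    cases j with
    | zero => exact hG0.2.2.2
    | succ i => exact (hGs i).2.2.2
  -- the coefficients and blocks
  set idx : ℕ → ℕ := fun n => Nat.findGreatest (fun j => N j ≤ n) n with hidxdef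
  set a : ℕ → ℝ := fun n => A (y (k (idx n))) n with hadef
  set u : ℕ → X := fun j => ∑ n ∈ Finset.Ico (N j) (N (j+1)), a n • e n with hudef
  have hidx : ∀ j n, n ∈ Finset.Ico (N j) (N (j+1)) → idx n = j := by
    intro j n hn
    rw [Finset.mem_Ico] at hn
    have hjn : j ≤ n := le_trans (hNmono.le_apply) hn.1
    have h1 : j ≤ idx n := Nat.le_findGreatest hjn hn.1
    have h2 : idx n ≤ j := by
      by_contra hlt
      push_neg at hlt
      have h3 : N (idx n) ≤ n := by
        refine Nat.findGreatest_spec (P := fun j => N j ≤ n) hjn hn.1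
      have h4 : N (j+1) ≤ N (idx n) := hNmono.monotone hlt
      omega
    omega
  have hublock : ∀ j, u j = P (N (j+1)) (y (k j)) - P (N j) (y (k j)) := by
    intro j
    rw [hudef]
    simp only [hPdef]
    rw [← Finset.sum_Ico_eq_sub _ (hNmono.monotone (Nat.le_succ j))]
    refine Finset.sum_congr rfl fun n hn => ?_
    rw [hadef]
    simp only
    rw [hidx j n hn]
  have hupert : ∀ j, ‖u j - y (k j)‖ ≤ 2 * ε j := by
    intro j
    rw [hublock j]
    have h1 : P (N (j+1)) (y (k j)) - P (N j) (y (k j)) - y (k j)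
        = -(y (k j) - P (N (j+1)) (y (k j))) - P (N j) (y (k j)) := by abel
    rw [h1]
    refine (norm_sub_le _ _).trans ?_
    rw [norm_neg]
    have := (hTail j).le
    have := (hPsmall j).le
    linarith
  -- the ℓ_q estimates on z j := y (k j)
  set σ : ℕ → ℕ := fun j => φ (2 * k j) with hσdef
  set τ : ℕ → ℕ := fun j => φ (2 * k j + 1) with hτdef
  have hklt : ∀ j, 2 * k j + 1 < 2 * k (j+1) := by
    intro j
    have h := hkmono (show j < j + 1 by omega)
    omega
  have hστ : ∀ j, σ j < τ j := fun j => hφ (by omega)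
  have hτσ : ∀ j, τ j < σ (j+1) := fun j => hφ (hklt j)
  have hzJ : ∀ j, y (k j) = J (lqSingle q (τ j) 1 - lqSingle q (σ j) 1) := by
    intro j
    simp only [hydef, hxdef, hτdef, hσdef, ← map_sub]
  have hzsum : ∀ (b : ℕ → ℝ) (s : Finset ℕ),
      ∑ j ∈ s, b j • y (k j) = J (∑ j ∈ s, b j • (lqSingle q (τ j) 1 - lqSingle q (σ j) 1)) := by
    intro b s
    rw [map_sum]
    refine Finset.sum_congr rfl fun j _ => ?_
    rw [hzJ j, map_smul]
  have hzlower : ∀ (b : ℕ → ℝ) (s : Finset ℕ),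
      c * (∑ j ∈ s, |b j| ^ q) ^ (1/q) ≤ ‖∑ j ∈ s, b j • y (k j)‖ := by
    intro b s
    rw [hzsum b s]
    refine le_trans ?_ (hJ _).2
    rw [norm_sum_pair' hq σ τ hστ hτσ b s]
    have hS : (0:ℝ) ≤ ∑ j ∈ s, |b j| ^ q :=
      Finset.sum_nonneg fun j _ => Real.rpow_nonneg (abs_nonneg (b j)) q
    have h1 : (∑ j ∈ s, |b j| ^ q) ^ (1/q) ≤ (2 * ∑ j ∈ s, |b j| ^ q) ^ (1/q) :=
      Real.rpow_le_rpow hS (by linarith) (by positivity)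
    exact mul_le_mul_of_nonneg_left h1 hc.le
  have hzupper : ∀ (b : ℕ → ℝ) (s : Finset ℕ),
      ‖∑ j ∈ s, b j • y (k j)‖ ≤ 2 * C * (∑ j ∈ s, |b j| ^ q) ^ (1/q) := by
    intro b s
    rw [hzsum b s]
    refine (hJ _).1.trans ?_
    rw [norm_sum_pair' hq σ τ hστ hτσ b s]
    have hS : (0:ℝ) ≤ ∑ j ∈ s, |b j| ^ q :=
      Finset.sum_nonneg fun j _ => Real.rpow_nonneg (abs_nonneg (b j)) q
    have h1 : (2 * ∑ j ∈ s, |b j| ^ q) ^ (1/q) ≤ 2 * (∑ j ∈ s, |b j| ^ q) ^ (1/q) := by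
      rw [Real.mul_rpow (by norm_num) hS]
      have h2 : (2:ℝ) ^ (1/q) ≤ 2 ^ (1:ℝ) :=
        Real.rpow_le_rpow_of_exponent_le (by norm_num) (by
          rw [div_le_one hq0]; linarith)
      rw [Real.rpow_one] at h2
      exact mul_le_mul_of_nonneg_right h2 (Real.rpow_nonneg hS _)
    have hC0 : 0 ≤ C := by
      have h3 := (hJ (lqSingle q 0 1)).1
      have h4 := (hJ (lqSingle q 0 1)).2
      rw [hsing 0, mul_one] at h3 h4
      have h5 := norm_nonneg (J (lqSingle q 0 1))
      linarith
    calc C * (2 * ∑ j ∈ s, |b j| ^ q) ^ (1/q)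
        ≤ C * (2 * (∑ j ∈ s, |b j| ^ q) ^ (1/q)) := mul_le_mul_of_nonneg_left h1 hC0
      _ = 2 * C * (∑ j ∈ s, |b j| ^ q) ^ (1/q) := by ring
  -- nonnegativity of the q-sums
  have hSnn : ∀ (b : ℕ → ℝ) (s : Finset ℕ), (0:ℝ) ≤ ∑ j ∈ s, |b j| ^ q :=
    fun b s => Finset.sum_nonneg fun j _ => Real.rpow_nonneg (abs_nonneg (b j)) q
  have habs_le : ∀ (b : ℕ → ℝ) (s : Finset ℕ), ∀ j ∈ s,
      |b j| ≤ (∑ i ∈ s, |b i| ^ q) ^ (1/q) := by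
    intro b s j hj
    have h1 : |b j| ^ q ≤ ∑ i ∈ s, |b i| ^ q :=
      Finset.single_le_sum (fun i _ => Real.rpow_nonneg (abs_nonneg (b i)) q) hj
    have h2 : (|b j| ^ q) ^ (1/q) ≤ (∑ i ∈ s, |b i| ^ q) ^ (1/q) :=
      Real.rpow_le_rpow (Real.rpow_nonneg (abs_nonneg _) _) h1 (by positivity)
    rwa [← Real.rpow_mul (abs_nonneg _), mul_one_div_cancel hqne, Real.rpow_one] at h2
  have hεsum : ∀ s : Finset ℕ, ∑ j ∈ s, ε j ≤ c/4 := by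
    intro s
    have h1 : ∑ j ∈ s, (1/2:ℝ)^j ≤ ∑' j : ℕ, (1/2:ℝ)^j :=
      Summable.sum_le_tsum s (fun j _ => by positivity) summable_geometric_two
    rw [tsum_geometric_two] at h1
    calc ∑ j ∈ s, ε j = (c/8) * ∑ j ∈ s, (1/2:ℝ)^j := by rw [hεdef, Finset.mul_sum]
      _ ≤ (c/8) * 2 := mul_le_mul_of_nonneg_left h1 (by positivity)
      _ = c/4 := by ring
  have hpert : ∀ (b : ℕ → ℝ) (s : Finset ℕ),
      ‖∑ j ∈ s, b j • u j - ∑ j ∈ s, b j • y (k j)‖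
        ≤ (c/2) * (∑ j ∈ s, |b j| ^ q) ^ (1/q) := by
    intro b s
    rw [← Finset.sum_sub_distrib]
    refine (norm_sum_le _ _).trans ?_
    have h1 : ∀ j ∈ s, ‖b j • u j - b j • y (k j)‖
        ≤ ((∑ i ∈ s, |b i| ^ q) ^ (1/q)) * (2 * ε j) := by
      intro j hj
      rw [← smul_sub, norm_smul, Real.norm_eq_abs]
      exact mul_le_mul (habs_le b s j hj) (hupert j) (norm_nonneg _)
        (Real.rpow_nonneg (hSnn b s) _)
    refine (Finset.sum_le_sum h1).trans ?_
    rw [← Finset.mul_sum]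
    have h2 : ∑ j ∈ s, 2 * ε j ≤ c/2 := by
      rw [← Finset.mul_sum]
      have := hεsum s
      linarith
    have h3 := Real.rpow_nonneg (hSnn b s) (1/q)
    calc (∑ i ∈ s, |b i| ^ q) ^ (1/q) * ∑ j ∈ s, (2 * ε j)
        ≤ (∑ i ∈ s, |b i| ^ q) ^ (1/q) * (c/2) := mul_le_mul_of_nonneg_left h2 h3
      _ = (c/2) * (∑ i ∈ s, |b i| ^ q) ^ (1/q) := mul_comm _ _
  -- conclusion
  refine ⟨u, ?_, ?_⟩
  · refine ⟨fun j => Finset.Ico (N j) (N (j+1)), a,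
      fun j => Finset.nonempty_Ico.mpr (hNlt j), ?_, fun j => rfl⟩
    intro j m hm k' hk'
    rw [Finset.mem_Ico] at hm hk'
    exact lt_of_lt_of_le hm.2 hk'.1
  · set C₀ : ℝ := max (max (2*C + c/2) (c/2)⁻¹) 1 with hC₀def
    have hc2 : (0:ℝ) < c/2 := by linarith
    refine ⟨C₀, le_max_right _ _, fun b s => ?_⟩
    have hlow : (c/2) * (∑ j ∈ s, |b j| ^ q) ^ (1/q) ≤ ‖∑ j ∈ s, b j • u j‖ := by
      have h1 := hzlower b s
      have h2 := hpert b s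
      have h4 := abs_norm_sub_norm_le (∑ j ∈ s, b j • u j) (∑ j ∈ s, b j • y (k j))
      have h5 := (abs_le.mp (h4.trans h2)).1
      linarith
    have hup : ‖∑ j ∈ s, b j • u j‖ ≤ (2*C + c/2) * (∑ j ∈ s, |b j| ^ q) ^ (1/q) := by
      have h1 := hzupper b s
      have h2 := hpert b s
      have h3 : ‖∑ j ∈ s, b j • u j‖ ≤ ‖∑ j ∈ s, b j • y (k j)‖
          + ‖∑ j ∈ s, b j • u j - ∑ j ∈ s, b j • y (k j)‖ := by
        have h4 : (∑ j ∈ s, b j • u j) = (∑ j ∈ s, b j • y (k j))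
            + (∑ j ∈ s, b j • u j - ∑ j ∈ s, b j • y (k j)) := by abel
        calc ‖∑ j ∈ s, b j • u j‖ = ‖(∑ j ∈ s, b j • y (k j))
            + (∑ j ∈ s, b j • u j - ∑ j ∈ s, b j • y (k j))‖ := by rw [← h4]
          _ ≤ _ := norm_add_le _ _
      linarith
    constructor
    · have hinv : C₀⁻¹ ≤ c/2 := by
        refine inv_le_of_inv_le₀ hc2 ?_
        exact le_trans (le_max_right (2*C + c/2) (c/2)⁻¹) (le_max_left _ _)
      have h6 := Real.rpow_nonneg (hSnn b s) (1/q)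
      exact le_trans (mul_le_mul_of_nonneg_right hinv h6) hlow
    · refine hup.trans ?_
      have h7 : (2*C + c/2) ≤ C₀ :=
        le_trans (le_max_left (2*C + c/2) (c/2)⁻¹) (le_max_left _ _)
      have h6 := Real.rpow_nonneg (hSnn b s) (1/q)
      exact mul_le_mul_of_nonneg_right h7 h6
end

section
/- Let X be a real Banach space with a Schauder basis (e_n)_{n∈ℕ} and let Y be an infinite-dimensional closed subspace of X. Then Y contains a semi-normalized sequence (v_j)_{j∈ℕ} that is equivalent to some block basic sequence with respect to (e_n). -/
open scoped BigOperators

open Filter Finset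

section Basis
variable {X : Type*} [NormedAddCommGroup X] [NormedSpace ℝ X]
variable (e : ℕ → X) (he : IsSchauderBasis e)

/-- The coefficient functionals of the Schauder basis. -/
noncomputable def sCoeff (x : X) : ℕ → ℝ := (he x).choose

theorem sCoeff_tendsto (x : X) :
    Tendsto (fun N => ∑ n ∈ range N, sCoeff e he x n • e n) atTop (nhds x) :=
  (he x).choose_spec.1

theorem sCoeff_unique {x : X} {a : ℕ → ℝ}
    (h : Tendsto (fun N => ∑ n ∈ range N, a n • e n) atTop (nhds x)) :
    a = sCoeff e he x :=
  (he x).choose_spec.2 a h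

theorem sCoeff_add (x y : X) :
    sCoeff e he (x + y) = fun n => sCoeff e he x n + sCoeff e he y n := by
  refine (sCoeff_unique e he ?_).symm
  have := (sCoeff_tendsto e he x).add (sCoeff_tendsto e he y)
  simpa [add_smul, Finset.sum_add_distrib] using this

theorem sCoeff_smul (c : ℝ) (x : X) :
    sCoeff e he (c • x) = fun n => c * sCoeff e he x n := by
  refine (sCoeff_unique e he ?_).symm
  have h := (tendsto_const_nhds (x := c)).smul (sCoeff_tendsto e he x)
  have heq : ∀ N : ℕ, ∑ n ∈ range N, (c * sCoeff e he x n) • e n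
      = c • ∑ n ∈ range N, sCoeff e he x n • e n := by
    intro N
    rw [Finset.smul_sum]
    exact Finset.sum_congr rfl fun n _ => mul_smul c _ _
  exact h.congr fun N => (heq N).symm

/-- The basis projections, as linear maps. -/
noncomputable def sP (M : ℕ) : X →ₗ[ℝ] X where
  toFun x := ∑ n ∈ range M, sCoeff e he x n • e n
  map_add' x y := by
    simp only [sCoeff_add e he x y, add_smul, Finset.sum_add_distrib]
  map_smul' c x := by
    simp only [sCoeff_smul e he c x, RingHom.id_apply, Finset.smul_sum, mul_smul]

theorem sP_apply (M : ℕ) (x : X) :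
    sP e he M x = ∑ n ∈ range M, sCoeff e he x n • e n := rfl

theorem sP_tendsto (x : X) : Tendsto (fun N => sP e he N x) atTop (nhds x) :=
  sCoeff_tendsto e he x

theorem sum_ite_range (T : Finset ℕ) (b : ℕ → ℝ) (N : ℕ) :
    ∑ n ∈ range N, (if n ∈ T then b n else 0) • e n
      = ∑ n ∈ T ∩ range N, b n • e n := by
  simp only [ite_smul, zero_smul]
  rw [Finset.sum_ite_mem, Finset.inter_comm]

theorem sCoeff_finsum (T : Finset ℕ) (b : ℕ → ℝ) :
    sCoeff e he (∑ n ∈ T, b n • e n) = fun n => if n ∈ T then b n else 0 := by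
  refine (sCoeff_unique e he ?_).symm
  have hconst : ∀ N ≥ T.sup id + 1,
      ∑ n ∈ range N, (if n ∈ T then b n else 0) • e n = ∑ n ∈ T, b n • e n := by
    intro N hN
    rw [sum_ite_range]
    congr 1
    apply Finset.inter_eq_left.mpr
    intro n hn
    exact Finset.mem_range.2 (lt_of_le_of_lt (Finset.le_sup (f := id) hn)
      (lt_of_lt_of_le (Nat.lt_succ_self _) hN))
  refine Tendsto.congr' ?_ tendsto_const_nhds
  filter_upwards [eventually_ge_atTop (T.sup id + 1)] with N hN
  exact (hconst N hN).symm

theorem sP_finsum (M : ℕ) (T : Finset ℕ) (b : ℕ → ℝ) :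
    sP e he M (∑ n ∈ T, b n • e n) = ∑ n ∈ T ∩ range M, b n • e n := by
  rw [sP_apply]
  rw [sCoeff_finsum e he T b]
  exact sum_ite_range e T b M

/-- The square-function style norm `sup_N ‖P_N x‖`. -/
noncomputable def sBnorm (x : X) : ℝ := ⨆ N, ‖sP e he N x‖

theorem sP_bddAbove (x : X) : BddAbove (Set.range fun N => ‖sP e he N x‖) :=
  ((sP_tendsto e he x).norm).bddAbove_range

theorem sP_le_bnorm (M : ℕ) (x : X) : ‖sP e he M x‖ ≤ sBnorm e he x :=
  le_ciSup (sP_bddAbove e he x) M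

theorem norm_le_bnorm (x : X) : ‖x‖ ≤ sBnorm e he x :=
  le_of_tendsto' (sP_tendsto e he x).norm (fun N => sP_le_bnorm e he N x)

theorem bnorm_nonneg (x : X) : 0 ≤ sBnorm e he x :=
  le_trans (norm_nonneg _) (sP_le_bnorm e he 0 x)

theorem bnorm_zero : sBnorm e he 0 = 0 := by
  unfold sBnorm
  simp [map_zero]

theorem bnorm_add_le (x y : X) : sBnorm e he (x + y) ≤ sBnorm e he x + sBnorm e he y :=
  ciSup_le fun N => by
    rw [map_add]
    exact (norm_add_le _ _).trans (add_le_add (sP_le_bnorm e he N x) (sP_le_bnorm e he N y))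

theorem bnorm_neg (x : X) : sBnorm e he (-x) = sBnorm e he x := by
  unfold sBnorm
  simp [map_neg]

theorem bnorm_smul (c : ℝ) (x : X) : sBnorm e he (c • x) = |c| * sBnorm e he x := by
  have hle : ∀ (c : ℝ) (x : X), sBnorm e he (c • x) ≤ |c| * sBnorm e he x := by
    intro c x
    refine ciSup_le fun N => ?_
    rw [map_smul, norm_smul, Real.norm_eq_abs]
    exact mul_le_mul_of_nonneg_left (sP_le_bnorm e he N x) (abs_nonneg c)
  refine le_antisymm (hle c x) ?_
  rcases eq_or_ne c 0 with rfl | hc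
  · simp [bnorm_zero, bnorm_nonneg]
  · have h2 := hle c⁻¹ (c • x)
    rw [inv_smul_smul₀ hc] at h2
    have : |c| * sBnorm e he x ≤ |c| * (|c⁻¹| * sBnorm e he (c • x)) :=
      mul_le_mul_of_nonneg_left h2 (abs_nonneg c)
    rwa [abs_inv, ← mul_assoc, mul_inv_cancel₀ (abs_ne_zero.2 hc), one_mul] at this

theorem bnorm_eq_zero {x : X} (h : sBnorm e he x = 0) : x = 0 :=
  norm_le_zero_iff.1 (h ▸ norm_le_bnorm e he x)

end Basis

section BSpace
variable {X : Type*} [NormedAddCommGroup X] [NormedSpace ℝ X]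

/-- Type synonym for `X` carrying the norm `sup_N ‖P_N x‖`. -/
@[nolint unusedArguments]
def BSpace (e : ℕ → X) (_he : IsSchauderBasis e) : Type _ := X

variable (e : ℕ → X) (he : IsSchauderBasis e)

instance : AddCommGroup (BSpace e he) := inferInstanceAs (AddCommGroup X)
instance : Module ℝ (BSpace e he) := inferInstanceAs (Module ℝ X)

/-- The identity, from `BSpace` to `X`. -/
def BSpace.toX (x : BSpace e he) : X := x

noncomputable instance : NormedAddCommGroup (BSpace e he) :=
  AddGroupNorm.toNormedAddCommGroup
    { toFun := fun x => sBnorm e he (BSpace.toX e he x)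
      map_zero' := bnorm_zero e he
      add_le' := fun x y => bnorm_add_le e he _ _
      neg' := fun x => bnorm_neg e he _
      eq_zero_of_map_eq_zero' := fun x h => bnorm_eq_zero e he h }

theorem BSpace.norm_def (x : BSpace e he) : ‖x‖ = sBnorm e he (BSpace.toX e he x) := rfl

noncomputable instance : NormedSpace ℝ (BSpace e he) where
  norm_smul_le c x := by
    rw [BSpace.norm_def, BSpace.norm_def]
    rw [show BSpace.toX e he (c • x) = c • BSpace.toX e he x from rfl]
    rw [bnorm_smul, Real.norm_eq_abs]

end BSpace

section Complete
variable {X : Type*} [NormedAddCommGroup X] [NormedSpace ℝ X] [CompleteSpace X]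
variable (e : ℕ → X) (he : IsSchauderBasis e)

theorem BSpace.dist_def (x y : BSpace e he) :
    dist x y = sBnorm e he (BSpace.toX e he x - BSpace.toX e he y) := by
  rw [dist_eq_norm]; rfl

noncomputable instance : CompleteSpace (BSpace e he) := by
  apply Metric.complete_of_cauchySeq_tendsto
  intro x hx
  set g : ℕ → X := fun k => BSpace.toX e he (x k) with hg
  have hcau : ∀ ε > 0, ∃ M, ∀ k ≥ M, ∀ l ≥ M, sBnorm e he (g k - g l) < ε := by
    intro ε hε
    obtain ⟨M, hM⟩ := Metric.cauchySeq_iff.1 hx ε hε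
    exact ⟨M, fun k hk l hl => by
      have := hM k hk l hl
      rwa [BSpace.dist_def] at this⟩
  have hPcau : ∀ N : ℕ, CauchySeq (fun k => sP e he N (g k)) := by
    intro N
    rw [Metric.cauchySeq_iff]
    intro ε hε
    obtain ⟨M, hM⟩ := hcau ε hε
    refine ⟨M, fun k hk l hl => ?_⟩
    rw [dist_eq_norm, ← map_sub]
    exact lt_of_le_of_lt (sP_le_bnorm e he N _) (hM k hk l hl)
  have hz : ∀ N, ∃ z : X, Tendsto (fun k => sP e he N (g k)) atTop (nhds z) :=
    fun N => cauchySeq_tendsto_of_complete (hPcau N)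
  choose z hzt using hz
  have hgc : CauchySeq g := by
    rw [Metric.cauchySeq_iff]
    intro ε hε
    obtain ⟨M, hM⟩ := hcau ε hε
    exact ⟨M, fun k hk l hl => by
      rw [dist_eq_norm]
      exact lt_of_le_of_lt (norm_le_bnorm e he _) (hM k hk l hl)⟩
  obtain ⟨xL, hxL⟩ := cauchySeq_tendsto_of_complete hgc
  have hzb : ∀ n : ℕ, ∃ b : ℝ, b • e n = z (n+1) - z n := by
    intro n
    have hmem : ∀ k, sP e he (n+1) (g k) - sP e he n (g k) ∈ (ℝ ∙ e n) := by
      intro k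
      have hh : sP e he (n+1) (g k) - sP e he n (g k) = sCoeff e he (g k) n • e n := by
        rw [sP_apply, sP_apply, Finset.sum_range_succ]
        abel
      rw [hh]
      exact Submodule.smul_mem _ _ (Submodule.mem_span_singleton_self _)
    have hcl : IsClosed ((ℝ ∙ e n) : Set X) := Submodule.closed_of_finiteDimensional _
    have hlim : Tendsto (fun k => sP e he (n+1) (g k) - sP e he n (g k)) atTop
        (nhds (z (n+1) - z n)) := (hzt (n+1)).sub (hzt n)
    exact Submodule.mem_span_singleton.1
      (hcl.mem_of_tendsto hlim (Filter.Eventually.of_forall hmem))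
  choose b hb using hzb
  have hz0 : z 0 = 0 := by
    have h0 : Tendsto (fun k => sP e he 0 (g k)) atTop (nhds (0 : X)) := by
      have : ∀ k, sP e he 0 (g k) = 0 := fun k => by simp [sP_apply]
      simpa [this] using tendsto_const_nhds
    exact tendsto_nhds_unique (hzt 0) h0
  have hzsum : ∀ N, z N = ∑ n ∈ range N, b n • e n := by
    intro N
    have htel := Finset.sum_range_sub (fun n => z n) N
    rw [hz0, sub_zero] at htel
    rw [← htel]
    exact (Finset.sum_congr rfl fun n _ => hb n).symm
  have hzx : Tendsto (fun N => z N) atTop (nhds xL) := by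
    rw [Metric.tendsto_atTop]
    intro ε hε
    have hε4 : 0 < ε/4 := by linarith
    obtain ⟨M, hM⟩ := hcau (ε/4) hε4
    have hM' : ∀ l ≥ M, sBnorm e he (g M - g l) < ε/4 := fun l hl => hM M le_rfl l hl
    have h1 : ∀ N, ‖sP e he N (g M) - z N‖ ≤ ε/4 := by
      intro N
      have hlim : Tendsto (fun l => ‖sP e he N (g M) - sP e he N (g l)‖) atTop
          (nhds ‖sP e he N (g M) - z N‖) := (tendsto_const_nhds.sub (hzt N)).norm
      refine le_of_tendsto hlim ?_
      filter_upwards [eventually_ge_atTop M] with l hl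
      rw [← map_sub]
      exact le_of_lt (lt_of_le_of_lt (sP_le_bnorm e he N _) (hM' l hl))
    have h2 : ‖g M - xL‖ ≤ ε/4 := by
      refine le_of_tendsto ((tendsto_const_nhds.sub hxL).norm) ?_
      filter_upwards [eventually_ge_atTop M] with l hl
      exact le_of_lt (lt_of_le_of_lt (norm_le_bnorm e he _) (hM' l hl))
    obtain ⟨N₀, hN₀⟩ := Metric.tendsto_atTop.1 (sP_tendsto e he (g M)) (ε/4) hε4
    refine ⟨N₀, fun N hN => ?_⟩
    rw [dist_eq_norm]
    have hsplit : z N - xL = (z N - sP e he N (g M)) + (sP e he N (g M) - g M) + (g M - xL) := by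
      abel
    rw [hsplit]
    have e1 : ‖z N - sP e he N (g M)‖ ≤ ε/4 := by rw [norm_sub_rev]; exact h1 N
    have e2 : ‖sP e he N (g M) - g M‖ < ε/4 := by
      rw [← dist_eq_norm]; exact hN₀ N hN
    have := norm_add₃_le (a := z N - sP e he N (g M)) (b := sP e he N (g M) - g M)
      (c := g M - xL)
    linarith
  have hbx : b = sCoeff e he xL := by
    refine sCoeff_unique e he ?_
    have : (fun N => ∑ n ∈ range N, b n • e n) = fun N => z N :=
      funext fun N => (hzsum N).symm
    rwa [this]
  have hPxL : ∀ N, sP e he N xL = z N := by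
    intro N
    rw [sP_apply, ← hbx, ← hzsum]
  refine ⟨(show BSpace e he from xL), ?_⟩
  rw [Metric.tendsto_atTop]
  intro ε hε
  have hε2 : 0 < ε/2 := by linarith
  obtain ⟨M, hM⟩ := hcau (ε/2) hε2
  refine ⟨M, fun k hk => ?_⟩
  rw [BSpace.dist_def]
  have hle : sBnorm e he (g k - xL) ≤ ε/2 := by
    refine ciSup_le fun N => ?_
    rw [map_sub, hPxL]
    have hlim : Tendsto (fun l => ‖sP e he N (g k) - sP e he N (g l)‖) atTop
        (nhds ‖sP e he N (g k) - z N‖) := (tendsto_const_nhds.sub (hzt N)).norm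
    refine le_of_tendsto hlim ?_
    filter_upwards [eventually_ge_atTop M] with l hl
    rw [← map_sub]
    exact le_of_lt (lt_of_le_of_lt (sP_le_bnorm e he N _) (hM k hk l hl))
  exact lt_of_le_of_lt hle (by linarith)

end Complete

section Bound
variable {X : Type*} [NormedAddCommGroup X] [NormedSpace ℝ X] [CompleteSpace X]
variable (e : ℕ → X) (he : IsSchauderBasis e)

/-- The identity from `BSpace` to `X` as a continuous linear map. -/
noncomputable def BSpace.idCLM : BSpace e he →L[ℝ] X :=
  LinearMap.mkContinuous
    { toFun := fun x => BSpace.toX e he x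
      map_add' := fun _ _ => rfl
      map_smul' := fun _ _ => rfl }
    1 (fun x => by
      rw [one_mul, BSpace.norm_def]
      exact norm_le_bnorm e he _)

theorem exists_proj_bound : ∃ K : ℝ, 1 ≤ K ∧ ∀ (x : X) (N : ℕ), ‖sP e he N x‖ ≤ K * ‖x‖ := by
  have hinj : LinearMap.ker (BSpace.idCLM e he : BSpace e he →ₗ[ℝ] X) = ⊥ := by
    exact LinearMap.ker_eq_bot_of_injective fun a b hab => hab
  have hsurj : LinearMap.range (BSpace.idCLM e he : BSpace e he →ₗ[ℝ] X) = ⊤ := by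
    rw [LinearMap.range_eq_top]
    intro a
    exact ⟨a, rfl⟩
  set E := ContinuousLinearEquiv.ofBijective (BSpace.idCLM e he) hinj hsurj with hE
  set S : X →L[ℝ] BSpace e he := (E.symm : X →L[ℝ] BSpace e he) with hS
  refine ⟨max ‖S‖ 1, le_max_right _ _, fun x N => ?_⟩
  have h1 : sBnorm e he x ≤ ‖S‖ * ‖x‖ := by
    have h2 : E.symm x = (show BSpace e he from x) := by
      have h0 : E (show BSpace e he from x) = x := rfl
      calc E.symm x = E.symm (E (show BSpace e he from x)) := by rw [h0]
        _ = (show BSpace e he from x) := E.symm_apply_apply _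
    have h3 := S.le_opNorm x
    rw [hS] at h3
    rw [show ((E.symm : X →L[ℝ] BSpace e he) x : BSpace e he) = E.symm x from rfl, h2,
      BSpace.norm_def] at h3
    exact h3
  calc ‖sP e he N x‖ ≤ sBnorm e he x := sP_le_bnorm e he N x
    _ ≤ ‖S‖ * ‖x‖ := h1
    _ ≤ max ‖S‖ 1 * ‖x‖ := mul_le_mul_of_nonneg_right (le_max_left _ _) (norm_nonneg x)

end Bound

section Small
variable {X : Type*} [NormedAddCommGroup X] [NormedSpace ℝ X] [CompleteSpace X]
variable (e : ℕ → X) (he : IsSchauderBasis e)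

theorem exists_small_proj (Y : Submodule ℝ X) (hYinf : ¬ FiniteDimensional ℝ Y)
    (N : ℕ) {ε : ℝ} (hε : 0 < ε) :
    ∃ y : X, y ∈ Y ∧ ‖y‖ = 1 ∧ ‖sP e he N y‖ < ε := by
  by_contra hcon
  push_neg at hcon
  have key : ∀ y ∈ Y, ε * ‖y‖ ≤ ‖sP e he N y‖ := by
    intro y hy
    rcases eq_or_ne y 0 with rfl | hy0
    · simp
    · have hny : ‖y‖ ≠ 0 := norm_ne_zero_iff.2 hy0
      have h1 : (‖y‖⁻¹ • y) ∈ Y := Y.smul_mem _ hy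
      have h2 : ‖‖y‖⁻¹ • y‖ = 1 := by
        rw [norm_smul, norm_inv, norm_norm, inv_mul_cancel₀ hny]
      have h3 := hcon _ h1 h2
      rw [map_smul, norm_smul, norm_inv, norm_norm] at h3
      calc ε * ‖y‖ ≤ (‖y‖⁻¹ * ‖sP e he N y‖) * ‖y‖ :=
            mul_le_mul_of_nonneg_right h3 (norm_nonneg y)
        _ = ‖sP e he N y‖ := by field_simp
  set S : Submodule ℝ X := Submodule.span ℝ (e '' {n | n < N}) with hSdef
  have hfin : FiniteDimensional ℝ S :=
    FiniteDimensional.span_of_finite ℝ ((Set.finite_Iio N).image e)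
  have hmem : ∀ y : Y, sP e he N (y : X) ∈ S := by
    intro y
    rw [sP_apply]
    refine Submodule.sum_mem _ fun n hn => Submodule.smul_mem _ _ (Submodule.subset_span ?_)
    exact ⟨n, Finset.mem_range.1 hn, rfl⟩
  set T : Y →ₗ[ℝ] S := LinearMap.codRestrict S ((sP e he N).comp Y.subtype) hmem with hT
  have hinj : Function.Injective T := by
    intro y₁ y₂ hy
    have h1 : sP e he N (y₁ : X) = sP e he N (y₂ : X) := congrArg Subtype.val hy
    have h2 : sP e he N ((y₁ - y₂ : Y) : X) = 0 := by
      rw [Submodule.coe_sub, map_sub, h1, sub_self]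
    have h3 := key _ (y₁ - y₂).2
    rw [h2, norm_zero] at h3
    have h5 : ‖((y₁ - y₂ : Y) : X)‖ = 0 := by
      nlinarith [norm_nonneg ((y₁ - y₂ : Y) : X)]
    have h6 : (y₁ - y₂ : Y) = 0 := Submodule.coe_eq_zero.1 (norm_eq_zero.1 h5)
    exact sub_eq_zero.1 h6
  exact hYinf (Module.Finite.of_injective T hinj)

end Small

theorem statement3' {X : Type*} [NormedAddCommGroup X] [NormedSpace ℝ X] [CompleteSpace X]
    (e : ℕ → X) (he : IsSchauderBasis e)
    (Y : Submodule ℝ X) (hYclosed : IsClosed (Y : Set X)) (hYinf : ¬ FiniteDimensional ℝ Y) :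
    ∃ v : ℕ → X, (∀ j, v j ∈ Y) ∧ (∃ c C : ℝ, 0 < c ∧ ∀ j, c ≤ ‖v j‖ ∧ ‖v j‖ ≤ C) ∧
      ∃ u : ℕ → X,
        (∃ (A : ℕ → Finset ℕ) (a : ℕ → ℝ),
          (∀ j, (A j).Nonempty) ∧
          (∀ j, ∀ m ∈ A j, ∀ k ∈ A (j + 1), m < k) ∧
          (∀ j, u j = ∑ n ∈ A j, a n • e n)) ∧
        (∃ C : ℝ, 1 ≤ C ∧ ∀ (a : ℕ → ℝ) (s : Finset ℕ),
          C⁻¹ * ‖∑ j ∈ s, a j • u j‖ ≤ ‖∑ j ∈ s, a j • v j‖ ∧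
          ‖∑ j ∈ s, a j • v j‖ ≤ C * ‖∑ j ∈ s, a j • u j‖) := by
  classical
  obtain ⟨K, hK1, hK⟩ := exists_proj_bound e he
  have hKpos : 0 < K := lt_of_lt_of_le one_pos hK1
  set δ : ℕ → ℝ := fun j => (1/2)^j * (32*K)⁻¹ with hδdef
  have hδpos : ∀ j, 0 < δ j := fun j => mul_pos (pow_pos (by norm_num) j) (by positivity)
  have hδle : ∀ j, δ j ≤ (32*K)⁻¹ := by
    intro j
    have h1 : (1/2:ℝ)^j ≤ 1 := pow_le_one₀ (by norm_num) (by norm_num)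
    calc δ j = (1/2)^j * (32*K)⁻¹ := rfl
      _ ≤ 1 * (32*K)⁻¹ := mul_le_mul_of_nonneg_right h1 (by positivity)
      _ = (32*K)⁻¹ := one_mul _
  have h32K : (32*K)⁻¹ ≤ 1/32 := by
    have h1 : (32:ℝ) ≤ 32*K := by nlinarith
    have := inv_anti₀ (by norm_num : (0:ℝ) < 32) h1
    simpa using this
  have hΦ : ∀ j N : ℕ, ∃ y : X, y ∈ Y ∧ ‖y‖ = 1 ∧ ‖sP e he N y‖ < δ j :=
    fun j N => exists_small_proj e he Y hYinf N (hδpos j)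
  choose Φ hΦY hΦ1 hΦP using hΦ
  have hnext : ∀ j N : ℕ, ∃ M, N < M ∧ ‖sP e he M (Φ j N) - Φ j N‖ < δ j := by
    intro j N
    obtain ⟨N₁, hN₁⟩ := Metric.tendsto_atTop.1 (sP_tendsto e he (Φ j N)) (δ j) (hδpos j)
    refine ⟨max N₁ (N+1), lt_of_lt_of_le (Nat.lt_succ_self N) (le_max_right _ _), ?_⟩
    have := hN₁ (max N₁ (N+1)) (le_max_left _ _)
    rwa [dist_eq_norm] at this
  choose Ψ hΨlt hΨ using hnext
  set Ns : ℕ → ℕ := fun j => Nat.rec 0 (fun j Nj => Ψ j Nj) j with hNs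
  have hNsucc : ∀ j, Ns (j+1) = Ψ j (Ns j) := fun j => rfl
  have hNmono : StrictMono Ns :=
    strictMono_nat_of_lt_succ (fun j => by rw [hNsucc]; exact hΨlt j (Ns j))
  set y : ℕ → X := fun j => Φ j (Ns j) with hy
  set u : ℕ → X := fun j => sP e he (Ns (j+1)) (y j) - sP e he (Ns j) (y j) with hu
  have hu_def : ∀ j, u j = sP e he (Ns (j+1)) (y j) - sP e he (Ns j) (y j) := fun j => rfl
  have hyY : ∀ j, y j ∈ Y := fun j => hΦY j (Ns j)
  have hy1 : ∀ j, ‖y j‖ = 1 := fun j => hΦ1 j (Ns j)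
  have hyu : ∀ j, ‖y j - u j‖ ≤ 2 * δ j := by
    intro j
    have h1 : ‖sP e he (Ns j) (y j)‖ < δ j := hΦP j (Ns j)
    have h2 : ‖sP e he (Ns (j+1)) (y j) - y j‖ < δ j := by rw [hNsucc]; exact hΨ j (Ns j)
    have h3 : y j - u j = (y j - sP e he (Ns (j+1)) (y j)) + sP e he (Ns j) (y j) := by
      rw [hu_def]; abel
    calc ‖y j - u j‖ = ‖(y j - sP e he (Ns (j+1)) (y j)) + sP e he (Ns j) (y j)‖ := by rw [h3]
      _ ≤ ‖y j - sP e he (Ns (j+1)) (y j)‖ + ‖sP e he (Ns j) (y j)‖ := norm_add_le _ _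
      _ ≤ δ j + δ j := add_le_add (by rw [norm_sub_rev]; exact le_of_lt h2) (le_of_lt h1)
      _ = 2 * δ j := by ring
  have h2δ : ∀ j, 2 * δ j ≤ 1/16 := by
    intro j
    have := hδle j
    have := h32K
    linarith
  have hu_lb : ∀ j, 1/2 ≤ ‖u j‖ := by
    intro j
    have h1 := hyu j
    have h2 := h2δ j
    have h3 := norm_sub_norm_le (y j) (u j)
    rw [hy1 j] at h3
    linarith
  have hu_ub : ∀ j, ‖u j‖ ≤ 2 := by
    intro j
    have h1 := hyu j
    have h2 := h2δ j
    have h4 := norm_sub_le (y j) (y j - u j)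
    rw [sub_sub_cancel, hy1 j] at h4
    linarith
  have hu_eq : ∀ j, u j = ∑ n ∈ Finset.Ico (Ns j) (Ns (j+1)), sCoeff e he (y j) n • e n := by
    intro j
    rw [hu_def, sP_apply, sP_apply,
      Finset.sum_Ico_eq_sub _ (le_of_lt (hNmono (Nat.lt_succ_self j)))]
  have hPu : ∀ (M : ℕ) (i : ℕ), sP e he M (u i)
      = ∑ n ∈ Finset.Ico (Ns i) (Ns (i+1)) ∩ Finset.range M, sCoeff e he (y i) n • e n := by
    intro M i
    rw [hu_eq i, sP_finsum]
  have hPu_lt : ∀ i j, i < j → sP e he (Ns j) (u i) = u i := by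
    intro i j hij
    rw [hPu, Finset.inter_eq_left.mpr ?_, ← hu_eq]
    intro n hn
    rw [Finset.mem_range]
    exact lt_of_lt_of_le (Finset.mem_Ico.1 hn).2 (hNmono.le_iff_le.2 hij)
  have hPu_ge : ∀ i j, j ≤ i → sP e he (Ns j) (u i) = 0 := by
    intro i j hij
    rw [hPu]
    convert Finset.sum_empty
    rw [Finset.eq_empty_iff_forall_notMem]
    intro n hn
    rw [Finset.mem_inter, Finset.mem_Ico, Finset.mem_range] at hn
    have := hNmono.le_iff_le.2 hij
    omega
  have hfilter : ∀ (s : Finset ℕ) (c : ℕ → ℝ) (j : ℕ),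
      sP e he (Ns j) (∑ i ∈ s, c i • u i) = ∑ i ∈ s.filter (fun i => i < j), c i • u i := by
    intro s c j
    rw [map_sum]
    have hterm : ∀ i ∈ s, sP e he (Ns j) (c i • u i) = if i < j then c i • u i else 0 := by
      intro i _
      rw [map_smul]
      rcases lt_or_ge i j with h | h
      · rw [hPu_lt i j h, if_pos h]
      · rw [hPu_ge i j h, if_neg (not_lt.2 h), smul_zero]
    rw [Finset.sum_congr rfl hterm, ← Finset.sum_filter]
  have hblock : ∀ (s : Finset ℕ) (c : ℕ → ℝ) (j : ℕ), j ∈ s →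
      c j • u j = sP e he (Ns (j+1)) (∑ i ∈ s, c i • u i)
        - sP e he (Ns j) (∑ i ∈ s, c i • u i) := by
    intro s c j hj
    rw [hfilter s c (j+1), hfilter s c j]
    have hsplit : s.filter (fun i => i < j+1) = insert j (s.filter (fun i => i < j)) := by
      ext i
      simp only [Finset.mem_filter, Finset.mem_insert, Nat.lt_succ_iff_lt_or_eq]
      constructor
      · rintro ⟨his, h | rfl⟩
        · exact Or.inr ⟨his, h⟩
        · exact Or.inl rfl
      · rintro (rfl | ⟨his, h⟩)
        · exact ⟨hj, Or.inr rfl⟩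
        · exact ⟨his, Or.inl h⟩
    rw [hsplit, Finset.sum_insert (by simp)]
    abel
  have hcoord : ∀ (s : Finset ℕ) (c : ℕ → ℝ), ∀ j ∈ s,
      |c j| ≤ 4*K*‖∑ i ∈ s, c i • u i‖ := by
    intro s c j hj
    set z := ∑ i ∈ s, c i • u i with hz
    have h1 : ‖c j • u j‖ ≤ 2*K*‖z‖ := by
      rw [hblock s c j hj]
      calc ‖sP e he (Ns (j+1)) z - sP e he (Ns j) z‖
          ≤ ‖sP e he (Ns (j+1)) z‖ + ‖sP e he (Ns j) z‖ := norm_sub_le _ _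
        _ ≤ K*‖z‖ + K*‖z‖ := add_le_add (hK z _) (hK z _)
        _ = 2*K*‖z‖ := by ring
    have h2 : |c j| * (1/2) ≤ |c j| * ‖u j‖ :=
      mul_le_mul_of_nonneg_left (hu_lb j) (abs_nonneg _)
    rw [norm_smul, Real.norm_eq_abs] at h1
    linarith
  have hsumδ : ∀ s : Finset ℕ, ∑ j ∈ s, δ j ≤ 2 * (32*K)⁻¹ := by
    intro s
    obtain ⟨n, hn⟩ := s.exists_nat_subset_range
    calc ∑ j ∈ s, δ j ≤ ∑ j ∈ range n, δ j :=
          Finset.sum_le_sum_of_subset_of_nonneg hn (fun j _ _ => le_of_lt (hδpos j))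
      _ = (∑ j ∈ range n, (1/2:ℝ)^j) * (32*K)⁻¹ := by rw [Finset.sum_mul]
      _ ≤ 2 * (32*K)⁻¹ :=
          mul_le_mul_of_nonneg_right (sum_geometric_two_le n) (by positivity)
  have hpert : ∀ (s : Finset ℕ) (c : ℕ → ℝ),
      ‖∑ j ∈ s, c j • y j - ∑ j ∈ s, c j • u j‖ ≤ (1/2) * ‖∑ j ∈ s, c j • u j‖ := by
    intro s c
    set z := ∑ i ∈ s, c i • u i with hz
    have h1 : ∑ j ∈ s, c j • y j - z = ∑ j ∈ s, c j • (y j - u j) := by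
      rw [hz, ← Finset.sum_sub_distrib]
      exact Finset.sum_congr rfl fun j _ => (smul_sub _ _ _).symm
    rw [h1]
    calc ‖∑ j ∈ s, c j • (y j - u j)‖ ≤ ∑ j ∈ s, ‖c j • (y j - u j)‖ := norm_sum_le _ _
      _ ≤ ∑ j ∈ s, (4*K*‖z‖) * (2*δ j) := by
          refine Finset.sum_le_sum fun j hjs => ?_
          rw [norm_smul, Real.norm_eq_abs]
          exact mul_le_mul (hcoord s c j hjs) (hyu j) (norm_nonneg _) (by positivity)
      _ = (8*K*‖z‖) * ∑ j ∈ s, δ j := by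
          rw [Finset.mul_sum]
          exact Finset.sum_congr rfl fun j _ => by ring
      _ ≤ (8*K*‖z‖) * (2*(32*K)⁻¹) :=
          mul_le_mul_of_nonneg_left (hsumδ s) (by positivity)
      _ = (1/2) * ‖z‖ := by
          field_simp
          ring
  have hdisjIco : ∀ {j j' n : ℕ}, n ∈ Finset.Ico (Ns j) (Ns (j+1)) →
      n ∈ Finset.Ico (Ns j') (Ns (j'+1)) → j = j' := by
    intro j j' n h1 h2
    rcases Finset.mem_Ico.1 h1 with ⟨a1, b1⟩
    rcases Finset.mem_Ico.1 h2 with ⟨a2, b2⟩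
    by_contra hne
    rcases lt_or_gt_of_ne hne with h | h
    · have hle : Ns (j+1) ≤ Ns j' := hNmono.le_iff_le.2 (by omega : j + 1 ≤ j')
      omega
    · have hle : Ns (j'+1) ≤ Ns j := hNmono.le_iff_le.2 (by omega : j' + 1 ≤ j)
      omega
  refine ⟨y, hyY, ⟨1, 1, one_pos, fun j => ⟨le_of_eq (hy1 j).symm, le_of_eq (hy1 j)⟩⟩,
    u, ?_, ?_⟩
  · refine ⟨fun j => Finset.Ico (Ns j) (Ns (j+1)),
      fun n => if h : ∃ j, n ∈ Finset.Ico (Ns j) (Ns (j+1))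
        then sCoeff e he (y h.choose) n else 0, ?_, ?_, ?_⟩
    · intro j
      rw [Finset.nonempty_Ico]
      exact hNmono (Nat.lt_succ_self j)
    · intro j m hm k hk
      exact lt_of_lt_of_le (Finset.mem_Ico.1 hm).2 (Finset.mem_Ico.1 hk).1
    · intro j
      rw [hu_eq j]
      refine Finset.sum_congr rfl fun n hn => ?_
      have hex : ∃ j', n ∈ Finset.Ico (Ns j') (Ns (j'+1)) := ⟨j, hn⟩
      show sCoeff e he (y j) n • e n =
        (if h : ∃ j', n ∈ Finset.Ico (Ns j') (Ns (j'+1))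
          then sCoeff e he (y h.choose) n else 0) • e n
      rw [dif_pos hex]
      have huniq : hex.choose = j := hdisjIco hex.choose_spec hn
      rw [huniq]
  · refine ⟨2, one_le_two, fun c s => ?_⟩
    have hp := hpert s c
    set z := ∑ j ∈ s, c j • u j with hz
    set w := ∑ j ∈ s, c j • y j with hw
    have h2 : ‖z - w‖ = ‖w - z‖ := norm_sub_rev _ _
    have h3 := norm_sub_norm_le z w
    have h4 := norm_sub_norm_le w z
    have hz0 := norm_nonneg z
    have hinv : (2:ℝ)⁻¹ = 1/2 := by norm_num
    constructor
    · rw [hinv]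
      linarith
    · linarith


theorem statement3 {X : Type*} [NormedAddCommGroup X] [NormedSpace ℝ X] [CompleteSpace X]
    (e : ℕ → X) (he : IsSchauderBasis e)
    (Y : Submodule ℝ X) (hYclosed : IsClosed (Y : Set X)) (hYinf : ¬ FiniteDimensional ℝ Y) :
    ∃ v : ℕ → X, (∀ j, v j ∈ Y) ∧ SemiNormalized v ∧
      ∃ u : ℕ → X, IsBlockBasic e u ∧ SeqEquiv v u := by
  obtain ⟨v, h1, h2, u, h3, h4⟩ := statement3' e he Y hYclosed hYinf
  exact ⟨v, h1, h2, u, h3, h4⟩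
end
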